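/- arXiv:2401.17962 — 8 statements merged into one kernel-verified Lean document; each statement's English description precedes it below -/
import Mathlib

section
/- Let P be a set of primes and q a prime not in P. Then no nonzero element of Δ[P] is q-divisible in Δ[P]. -/
def Delta (P : Set ℕ) : AddSubgroup ℚ :=
  AddSubgroup.closure
    {x : ℚ | ∃ (m : ℤ) (l : List ℕ), (∀ p ∈ l, p ∈ P) ∧ x = (m : ℚ) / (l.prod : ℕ)}

lemma mem_delta_form (P : Set ℕ) (hP : ∀ p ∈ P, p.Prime) (q : ℕ) (hq : q.Prime) (hqP : q ∉ P)
    (x : ℚ) (hx : x ∈ Delta P) :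
    ∃ (m : ℤ) (d : ℕ), 0 < d ∧ ¬ q ∣ d ∧ x = (m : ℚ) / (d : ℕ) := by
  induction hx using AddSubgroup.closure_induction with
  | mem y hy =>
    obtain ⟨m, l, hl, rfl⟩ := hy
    refine ⟨m, l.prod, ?_, ?_, rfl⟩
    · exact List.prod_pos fun p hp => (hP p (hl p hp)).pos
    · intro hdvd
      obtain ⟨p, hpl, hqp⟩ := (Nat.Prime.prime hq).dvd_prod_iff.mp hdvd
      have hpq : q = p := ((Nat.prime_dvd_prime_iff_eq hq (hP p (hl p hpl))).mp hqp)
      exact hqP (hpq ▸ hl p hpl)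
  | zero => exact ⟨0, 1, one_pos, by simp [hq.one_lt.ne'], by simp⟩
  | add y z hy hz ihy ihz =>
    obtain ⟨m1, d1, hd1, hq1, rfl⟩ := ihy
    obtain ⟨m2, d2, hd2, hq2, rfl⟩ := ihz
    refine ⟨m1 * d2 + m2 * d1, d1 * d2, Nat.mul_pos hd1 hd2, ?_, ?_⟩
    · intro h
      rcases (Nat.Prime.dvd_mul hq).mp h with h | h
      exacts [hq1 h, hq2 h]
    · have h1 : (d1 : ℚ) ≠ 0 := Nat.cast_ne_zero.mpr hd1.ne'
      have h2 : (d2 : ℚ) ≠ 0 := Nat.cast_ne_zero.mpr hd2.ne'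
      field_simp
      push_cast; ring
  | neg y hy ihy =>
    obtain ⟨m, d, hd, hqd, rfl⟩ := ihy
    exact ⟨-m, d, hd, hqd, by push_cast; ring⟩

/-- if `q` is a prime not in `P`, no nonzero element of `Δ[P]` is
`q`-divisible in `Δ[P]`. -/
theorem stmt_5 (P : Set ℕ) (hP : ∀ p ∈ P, p.Prime) (q : ℕ) (hq : q.Prime) (hqP : q ∉ P)
    (a : ℚ) (ha : a ∈ Delta P) (ha0 : a ≠ 0) :
    ¬ ∀ n : ℕ, ∃ x ∈ Delta P, ((q : ℤ) ^ n) • x = a := by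
  intro h
  set n := a.num.natAbs + 1 with hn
  obtain ⟨x, hx, hxa⟩ := h n
  obtain ⟨m, d, hd, hqd, rfl⟩ := mem_delta_form P hP q hq hqP x hx
  have hdQ : (d : ℚ) ≠ 0 := Nat.cast_ne_zero.mpr hd.ne'
  -- a * d = q^n * m
  have key : a.num * d = a.den * ((q : ℤ) ^ n * m) := by
    have h1 : a * d = (q : ℚ) ^ n * m := by
      rw [← hxa]; push_cast [zsmul_eq_mul]; field_simp
    have h2 : ((a.num : ℚ) / a.den) * d = (q : ℚ) ^ n * m := by
      rw [Rat.num_div_den]; exact h1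
    have hden : (a.den : ℚ) ≠ 0 := Nat.cast_ne_zero.mpr a.den_nz
    field_simp at h2
    have h3 : a.num * (d:ℤ) = (q^n : ℕ) * m * a.den := by
      have h2' : (a.num : ℚ) * d = ((q^n : ℕ) : ℚ) * m * a.den := by
        push_cast at h2 ⊢; linear_combination h2
      exact_mod_cast h2'
    push_cast at h3 ⊢
    linarith
  have hdvd : (q : ℤ) ^ n ∣ a.num * d := by
    rw [key]; exact Dvd.dvd.mul_left ⟨m, rfl⟩ _
  have hqZ : Prime (q : ℤ) := Nat.prime_iff_prime_int.mp hq
  have hndvd : ¬ (q : ℤ) ∣ (d : ℤ) := by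
    rw [Int.natCast_dvd_natCast]; exact hqd
  have hnum : (q : ℤ) ^ n ∣ a.num := hqZ.pow_dvd_of_dvd_mul_right n hndvd hdvd
  have hnum0 : a.num ≠ 0 := Rat.num_ne_zero.mpr ha0
  have hle : (q : ℤ) ^ n ≤ |a.num| := Int.le_of_dvd (abs_pos.mpr hnum0) ((dvd_abs _ _).mpr hnum)
  have hlt : (a.num.natAbs : ℤ) < (q : ℤ) ^ n := by
    have h1 : n < q ^ n := Nat.lt_pow_self hq.one_lt
    have h2 : a.num.natAbs < q ^ n := Nat.lt_of_lt_of_le (Nat.lt_succ_self _) h1.le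
    exact_mod_cast h2
  rw [Int.abs_eq_natAbs] at hle
  omega
end

section
/- If P and P' are sets of primes with P ⊄ P', then there is no injective group homomorphism from Δ[P] into Δ[P']. -/
lemma den_div_dvd (m : ℤ) (n : ℕ) : ((m : ℚ) / (n : ℚ)).den ∣ n := by
  have h := Rat.den_dvd m (n : ℤ)
  rw [Rat.divInt_eq_div, Int.cast_natCast] at h
  exact_mod_cast h

lemma delta_den (P : Set ℕ) (hP : ∀ p ∈ P, p.Prime) {p : ℕ} (hp : p.Prime)
    (hpP : p ∉ P) {x : ℚ} (hx : x ∈ Delta P) : ¬ p ∣ x.den := by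
  induction hx using AddSubgroup.closure_induction with
  | mem x hx =>
      obtain ⟨m, l, hl, rfl⟩ := hx
      intro hdvd
      have hpl : p ∣ l.prod := dvd_trans hdvd (den_div_dvd m l.prod)
      obtain ⟨q, hq, hpq⟩ := hp.prime.dvd_prod_iff.mp hpl
      have := (Nat.prime_dvd_prime_iff_eq hp (hP q (hl q hq))).mp hpq
      exact hpP (this ▸ hl q hq)
  | zero => simpa using hp.ne_one
  | add x y hx hy ihx ihy =>
      intro hdvd
      rcases (Nat.Prime.dvd_mul hp).mp (dvd_trans hdvd (Rat.add_den_dvd x y)) with h | h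
      · exact ihx h
      · exact ihy h
  | neg x hx ih => simpa using ih

lemma delta_div (P : Set ℕ) {p : ℕ} (hp : p.Prime) (hpP : p ∈ P)
    {x : ℚ} (hx : x ∈ Delta P) : ∃ y ∈ Delta P, x = (p : ℚ) * y := by
  induction hx using AddSubgroup.closure_induction with
  | mem x hx =>
      obtain ⟨m, l, hl, rfl⟩ := hx
      refine ⟨(m : ℚ) / (((p :: l).prod : ℕ) : ℚ), AddSubgroup.subset_closure
        ⟨m, p :: l, ?_, rfl⟩, ?_⟩
      · intro q hq
        rcases List.mem_cons.mp hq with rfl | h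
        · exact hpP
        · exact hl q h
      · rw [List.prod_cons, Nat.cast_mul]
        have hp0 : (p : ℚ) ≠ 0 := Nat.cast_ne_zero.mpr hp.ne_zero
        rcases eq_or_ne ((l.prod : ℕ) : ℚ) 0 with h0 | h0
        · simp [h0]
        · rw [mul_comm ((p:ℚ)), div_mul_eq_mul_div, mul_comm ((m:ℚ)), mul_div_mul_left _ _ hp0]
  | zero => exact ⟨0, zero_mem _, by simp⟩
  | add x y hx hy ihx ihy =>
      obtain ⟨a, ha, rfl⟩ := ihx
      obtain ⟨b, hb, rfl⟩ := ihy
      exact ⟨a + b, add_mem ha hb, by ring⟩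
  | neg x hx ih =>
      obtain ⟨a, ha, rfl⟩ := ih
      exact ⟨-a, neg_mem ha, by ring⟩

lemma delta_div_pow (P : Set ℕ) {p : ℕ} (hp : p.Prime) (hpP : p ∈ P)
    {x : ℚ} (hx : x ∈ Delta P) (n : ℕ) : ∃ y ∈ Delta P, x = (p : ℚ) ^ n * y := by
  induction n with
  | zero => exact ⟨x, hx, by simp⟩
  | succ n ih =>
      obtain ⟨y, hy, rfl⟩ := ih
      obtain ⟨z, hz, rfl⟩ := delta_div P hp hpP hy
      exact ⟨z, hz, by ring⟩

/-- if `P ⊄ P'` are sets of primes, there is no injective group homomorphism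
from `Δ[P]` into `Δ[P']`. -/
theorem stmt_6 (P P' : Set ℕ) (hP : ∀ p ∈ P, p.Prime) (hP' : ∀ p ∈ P', p.Prime)
    (hPP' : ¬ P ⊆ P') :
    ¬ ∃ f : Delta P →+ Delta P', Function.Injective f := by
  rintro ⟨f, hf⟩
  obtain ⟨p, hpP, hpP'⟩ := Set.not_subset.mp hPP'
  have hp := hP p hpP
  have h1 : (1 : ℚ) ∈ Delta P := AddSubgroup.subset_closure ⟨1, [], by simp, by simp⟩
  set one : Delta P := ⟨1, h1⟩ with hone
  have key : ∀ n : ℕ, ((p : ℤ)) ^ n ∣ ((f one : ℚ)).num := by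
    intro n
    obtain ⟨y, hy, hxy⟩ := delta_div_pow P hp hpP h1 n
    have heq : one = (p ^ n : ℕ) • (⟨y, hy⟩ : Delta P) := by
      apply Subtype.ext
      show (1 : ℚ) = ((p ^ n : ℕ) • (⟨y, hy⟩ : Delta P) : ℚ)
      rw [nsmul_eq_mul]
      push_cast
      exact hxy
    have hfeq : (f one : ℚ) = (p : ℚ) ^ n * (f ⟨y, hy⟩ : ℚ) := by
      rw [heq, map_nsmul, AddSubgroup.coe_nsmul, nsmul_eq_mul]
      push_cast
      ring
    set z : ℚ := (f one : ℚ) with hz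
    set w : ℚ := (f ⟨y, hy⟩ : ℚ) with hw
    have hwden : ¬ p ∣ w.den := delta_den P' hP' hp hpP' (f ⟨y, hy⟩).2
    have hint : z.num * (w.den : ℤ) = (p : ℤ) ^ n * (w.num * (z.den : ℤ)) := by
      have hzd : ((z.den : ℚ)) ≠ 0 := Nat.cast_ne_zero.mpr z.den_nz
      have hwd : ((w.den : ℚ)) ≠ 0 := Nat.cast_ne_zero.mpr w.den_nz
      have h2 : (z.num : ℚ) * (w.den : ℚ) = (p : ℚ) ^ n * ((w.num : ℚ) * (z.den : ℚ)) := by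
        rw [← Rat.num_div_den z, ← Rat.num_div_den w] at hfeq
        field_simp at hfeq
        linarith [hfeq]
      exact_mod_cast h2
    have hdvd : (p : ℤ) ^ n ∣ z.num * (w.den : ℤ) := ⟨w.num * (z.den : ℤ), hint⟩
    have hpZ : Prime (p : ℤ) := Nat.prime_iff_prime_int.mp hp
    have hnd : ¬ (p : ℤ) ∣ (w.den : ℤ) := by exact_mod_cast hwden
    exact (hpZ.pow_dvd_of_dvd_mul_right n hnd hdvd : _)
  have hnum : ((f one : ℚ)).num = 0 := by
    by_contra h
    set k : ℕ := ((f one : ℚ)).num.natAbs with hk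
    have hk0 : 0 < k := Int.natAbs_pos.mpr h
    have hdvd : p ^ (k + 1) ∣ k := by
      have h3 : ((p : ℤ)) ^ (k + 1) ∣ (k : ℤ) := Int.dvd_natAbs.mpr (key (k + 1))
      exact_mod_cast h3
    have hle : p ^ (k + 1) ≤ k := Nat.le_of_dvd hk0 hdvd
    have hlt : k + 1 < p ^ (k + 1) := Nat.lt_pow_self hp.one_lt
    omega
  have hzero : f one = 0 := by
    apply Subtype.ext
    show (f one : ℚ) = 0
    exact Rat.num_eq_zero.mp hnum
  have : one = 0 := hf (by rw [hzero, map_zero])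
  have : (1 : ℚ) = 0 := congrArg Subtype.val this
  norm_num at this
end

section
/- Let P, P' be sets of primes with P ⊄ P' and let F be the group of finitary permutations of ℕ. Then there is no injective group homomorphism from Δ[P] × F into Δ[P'] × F. -/
/-- The group of finitary permutations of `ℕ`: permutations moving only finitely
many points. -/
def FinitaryPerm : Subgroup (Equiv.Perm ℕ) where
  carrier := {f | {n | f n ≠ n}.Finite}
  one_mem' := by simp
  mul_mem' := by
    intro a b ha hb
    refine Set.Finite.subset (hb.union ha) fun n hn => ?_
    rw [Set.mem_union]
    by_contra h
    push_neg at h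
    obtain ⟨h1, h2⟩ := h
    simp only [Set.mem_setOf_eq, not_not] at h1 h2
    exact hn (by simp [Equiv.Perm.mul_apply, h1, h2])
  inv_mem' := by
    intro a ha
    refine Set.Finite.subset ha fun n hn => ?_
    simp only [Set.mem_setOf_eq] at hn ⊢
    intro h
    exact hn (by simpa using congrArg (⇑a⁻¹) h.symm)

/-- Every finitary permutation has finite order. -/
lemma finitaryPerm_isOfFinOrder (σ : FinitaryPerm) : IsOfFinOrder σ := by
  obtain ⟨σ, hσ⟩ := σ
  have hfin : {n | σ n ≠ n}.Finite := hσ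
  set S : Set ℕ := {n | σ n ≠ n} with hS
  have hinv : ∀ x, x ∈ S ↔ σ x ∈ S := by
    intro x
    simp only [hS, Set.mem_setOf_eq]
    constructor
    · intro hx h
      exact hx (σ.injective h)
    · intro hx h
      exact hx (congrArg σ h)
  have : Fintype S := hfin.fintype
  have hfo : IsOfFinOrder (σ.subtypePerm (fun x => (hinv x).symm)) := by
    exact isOfFinOrder_of_finite _
  obtain ⟨m, hm, hσm⟩ := hfo.exists_pow_eq_one
  refine isOfFinOrder_iff_pow_eq_one.2 ⟨m, hm, ?_⟩
  have hpow : (σ.subtypePerm (fun x => (hinv x).symm)) ^ m = 1 := hσm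
  rw [Equiv.Perm.subtypePerm_pow] at hpow
  ext n
  simp only [Subgroup.coe_pow, Subgroup.coe_one, Equiv.Perm.coe_one, id_eq]
  by_cases hn : n ∈ S
  · have := congrArg (fun π => (π ⟨n, hn⟩ : ℕ)) hpow
    simpa using this
  · -- n is fixed by σ, hence by σ ^ m
    have hfix : σ n = n := by simpa [hS, Set.mem_setOf_eq, not_not] using hn
    have : ∀ k : ℕ, (σ ^ k) n = n := by
      intro k
      induction k with
      | zero => simp
      | succ k ih => rw [pow_succ, Equiv.Perm.mul_apply, hfix, ih]
    exact this m

/-- No `p` in the denominator of elements of `Δ[P']` when `p ∉ P'`. -/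
lemma den_not_dvd {P' : Set ℕ} (hP' : ∀ p ∈ P', p.Prime) {p : ℕ} (hp : p.Prime)
    (hp' : p ∉ P') : ∀ x ∈ Delta P', ¬ (p ∣ (x : ℚ).den) := by
  intro x hx
  refine AddSubgroup.closure_induction ?_ ?_ ?_ ?_ hx
  · rintro y ⟨m, l, hl, rfl⟩ hdvd
    have h1 : ((m : ℚ) / (l.prod : ℕ)).den ∣ l.prod := by
      have heq : (m : ℚ) / ((l.prod : ℕ) : ℚ) = Rat.divInt m (l.prod : ℤ) := by
        rw [Rat.divInt_eq_div, Int.cast_natCast]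
      rw [heq]
      exact_mod_cast Rat.den_dvd m (l.prod : ℤ)
    have h2 : p ∣ l.prod := hdvd.trans h1
    have h3 : ∃ q ∈ l, p ∣ q := (hp.prime.dvd_prod_iff).1 h2
    obtain ⟨q, hq, hpq⟩ := h3
    have : p = q := ((Nat.prime_dvd_prime_iff_eq hp (hP' q (hl q hq))).1 hpq)
    exact hp' (this ▸ hl q hq)
  · simpa using hp.one_lt.ne'
  · intro a b _ _ ha hb hdvd
    have := hdvd.trans (Rat.add_den_dvd a b)
    rcases hp.prime.dvd_mul.1 this with h | h
    · exact ha h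
    · exact hb h
  · intro a _ ha
    simpa using ha

/-- if `P ⊄ P'` are sets of primes, there is no injective group homomorphism
from `Δ[P] × F` into `Δ[P'] × F`, where `F` is the finitary symmetric group on `ℕ`. -/
theorem stmt_8 (P P' : Set ℕ) (hP : ∀ p ∈ P, p.Prime) (hP' : ∀ p ∈ P', p.Prime)
    (hPP' : ¬ P ⊆ P') :
    ¬ ∃ f : Multiplicative (Delta P) × FinitaryPerm →*
        Multiplicative (Delta P') × FinitaryPerm, Function.Injective f := by
  rintro ⟨f, hf⟩
  obtain ⟨p, hpP, hpP'⟩ := Set.not_subset.1 hPP'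
  have hp : p.Prime := hP p hpP
  haveI : Fact p.Prime := ⟨hp⟩
  have hp0 : (p : ℚ) ≠ 0 := by exact_mod_cast hp.pos.ne'
  -- the elements 1/p^n of Δ[P]
  have hmem : ∀ n : ℕ, ((p : ℚ) ^ n)⁻¹ ∈ Delta P := by
    intro n
    apply AddSubgroup.subset_closure
    refine ⟨1, List.replicate n p, ?_, ?_⟩
    · intro q hq
      rw [List.eq_of_mem_replicate hq]; exact hpP
    · rw [List.prod_replicate]
      push_cast
      rw [one_div]
  set a : ℕ → Delta P := fun n => ⟨((p : ℚ) ^ n)⁻¹, hmem n⟩ with ha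
  set g : ℕ → Multiplicative (Delta P) × FinitaryPerm :=
    fun n => (Multiplicative.ofAdd (a n), 1) with hg
  have hkey : ∀ n : ℕ, (g n) ^ (p ^ n) = g 0 := by
    intro n
    refine Prod.ext ?_ (by simp [hg])
    show Multiplicative.ofAdd (a n) ^ (p ^ n) = Multiplicative.ofAdd (a 0)
    rw [← ofAdd_nsmul]
    congr 1
    refine Subtype.ext ?_
    have : ((p ^ n • a n : Delta P) : ℚ) = ((p ^ n : ℕ) : ℚ) * ((a n : Delta P) : ℚ) := by
      push_cast
      ring
    rw [this]
    show ((p ^ n : ℕ) : ℚ) * ((p : ℚ) ^ n)⁻¹ = ((p : ℚ) ^ 0)⁻¹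
    push_cast
    rw [mul_inv_cancel₀ (pow_ne_zero _ hp0), pow_zero, inv_one]
  -- image values
  set q : ℕ → Delta P' := fun n => Multiplicative.toAdd (f (g n)).1 with hq
  have himg : ∀ n : ℕ, (q 0 : ℚ) = (p : ℚ) ^ n * (q n : ℚ) := by
    intro n
    have h1 : f (g 0) = (f (g n)) ^ (p ^ n) := by rw [← map_pow, hkey]
    have h2 : (f (g 0)).1 = (f (g n)).1 ^ (p ^ n) := by rw [h1, Prod.pow_fst]
    have h3 : q 0 = (p ^ n : ℕ) • (q n) := by
      simp only [hq, h2, toAdd_pow]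
    have := congrArg (fun x : Delta P' => (x : ℚ)) h3
    simpa [nsmul_eq_mul] using this
  -- q 0 ≠ 0
  have hg0 : ¬ IsOfFinOrder (g 0) := by
    intro hfo
    obtain ⟨m, hm, hgm⟩ := hfo.exists_pow_eq_one
    have h1 : (g 0).1 ^ m = 1 := by rw [← Prod.pow_fst, hgm]; rfl
    have h2 : m • (a 0) = 0 := by
      have := congrArg Multiplicative.toAdd h1
      simpa [hg, toAdd_pow] using this
    have := congrArg (fun x : Delta P => (x : ℚ)) h2
    have h3 : (m : ℚ) * ((p : ℚ) ^ 0)⁻¹ = 0 := by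
      simpa [ha, nsmul_eq_mul] using this
    simp at h3
    omega
  have hq0 : (q 0 : ℚ) ≠ 0 := by
    intro h0
    apply hg0
    have hq0' : q 0 = 0 := Subtype.ext h0
    have hfst : (f (g 0)).1 = 1 := by
      have : Multiplicative.toAdd (f (g 0)).1 = 0 := hq0'
      simpa using this
    have hfo : IsOfFinOrder (f (g 0)) := by
      rw [← Prod.mk.eta (p := f (g 0)), hfst]
      exact IsOfFinOrder.prod_mk IsOfFinOrder.one (finitaryPerm_isOfFinOrder _)
    obtain ⟨m, hm, hgm⟩ := hfo.exists_pow_eq_one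
    refine isOfFinOrder_iff_pow_eq_one.2 ⟨m, hm, ?_⟩
    apply hf
    rw [map_pow, hgm, map_one]
  -- p-adic valuation contradiction
  set v : ℤ := padicValRat p (q 0) with hv
  have hcontra : ∀ n : ℕ, (n : ℤ) ≤ v := by
    intro n
    have hqn : (q n : ℚ) ≠ 0 := by
      intro h0
      apply hq0
      rw [himg n, h0, mul_zero]
    have hval : v = (n : ℤ) + padicValRat p (q n) := by
      rw [hv, himg n, padicValRat.mul (pow_ne_zero _ hp0) hqn]
      congr 1
      rw [show ((p : ℚ) ^ n) = ((p : ℚ)) ^ n from rfl, padicValRat.pow (p : ℚ),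
        padicValRat.self hp.one_lt, mul_one]
    have hnn : 0 ≤ padicValRat p (q n) := by
      have hden : padicValNat p (q n : ℚ).den = 0 :=
        padicValNat.eq_zero_of_not_dvd (den_not_dvd hP' hp hpP' _ (q n).2)
      rw [padicValRat, hden]
      simp [padicValInt]
    omega
  have := hcontra (v.toNat + 1)
  omega
end

section
/- There exist 2^ℵ₀ countable groups that are pairwise non-embeddable, i.e., a family (G_i) of countably infinite groups indexed by a set of cardinality 2^ℵ₀ such that for i ≠ j there is no injective group homomorphism from G_i into G_j. -/
open Cardinal


def deltaP (P : Set ℕ) : AddSubgroup ℚ where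
  carrier := {q : ℚ | ∀ r : ℕ, r.Prime → r ∣ q.den → r ∈ P}
  zero_mem' := by
    intro r hr hd
    simp at hd
    exact absurd hd hr.ne_one
  add_mem' := by
    intro a b ha hb r hr hd
    rcases (Nat.Prime.dvd_mul hr).mp (dvd_trans hd (Rat.add_den_dvd a b)) with h | h
    · exact ha r hr h
    · exact hb r hr h
  neg_mem' := by intro a ha r hr hd; rw [Rat.neg_den] at hd; exact ha r hr hd

lemma mem_deltaP {P : Set ℕ} {q : ℚ} :
    q ∈ deltaP P ↔ ∀ r : ℕ, r.Prime → r ∣ q.den → r ∈ P := Iff.rfl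

lemma natCast_mem_deltaP (P : Set ℕ) (n : ℕ) : (n : ℚ) ∈ deltaP P := by
  rw [mem_deltaP]; intro r hr hd
  rw [Rat.den_natCast] at hd
  exact absurd (Nat.eq_one_of_dvd_one hd) hr.ne_one

lemma inv_pow_mem_deltaP {P : Set ℕ} {p : ℕ} (hp0 : p.Prime) (hp : p ∈ P) (n : ℕ) :
    (((p ^ n : ℕ) : ℚ))⁻¹ ∈ deltaP P := by
  rw [mem_deltaP]; intro r hr hd
  rw [Rat.inv_natCast_den] at hd
  split_ifs at hd with h
  · exact absurd (Nat.eq_one_of_dvd_one hd) hr.ne_one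
  · rw [(Nat.prime_dvd_prime_iff_eq hr hp0).mp (Nat.Prime.dvd_of_dvd_pow hr hd)]
    exact hp

lemma no_embedding {P Q : Set ℕ} {p : ℕ} (hp0 : p.Prime) (hpP : p ∈ P) (hpQ : p ∉ Q)
    (g : deltaP P →+ deltaP Q) : ¬ Function.Injective g := by
  intro hinj
  set one : deltaP P := ⟨1, by exact_mod_cast natCast_mem_deltaP P 1⟩ with hone
  set x := g one with hx
  have hone0 : one ≠ 0 := by
    intro h
    have h2 : ((1 : ℚ)) = 0 := congrArg (fun z : deltaP P => (z : ℚ)) h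
    norm_num at h2
  have hx0 : (x : ℚ) ≠ 0 := by
    intro h
    exact hone0 (hinj (by rw [← hx, map_zero]; exact Subtype.ext h))
  set q : ℚ := (x : ℚ) with hq
  have ha0 : q.num ≠ 0 := Rat.num_ne_zero.mpr hx0
  set n : ℕ := q.num.natAbs with hn
  set u : deltaP P := ⟨(((p ^ n : ℕ) : ℚ))⁻¹, inv_pow_mem_deltaP hp0 hpP n⟩ with hu
  have hpn0 : ((p ^ n : ℕ) : ℚ) ≠ 0 := by
    exact_mod_cast pow_ne_zero n (Nat.cast_ne_zero.mpr hp0.ne_zero : (p:ℚ) ≠ 0)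
  have key : (p ^ n : ℕ) • u = one := by
    apply Subtype.ext
    push_cast
    rw [nsmul_eq_mul]
    push_cast
    simp only [hu, hone]
    push_cast
    exact mul_inv_cancel₀ (pow_ne_zero n (Nat.cast_ne_zero.mpr hp0.ne_zero : (p:ℚ) ≠ 0))
  set y := g u with hy
  set c : ℚ := (y : ℚ) with hc
  have hysmul : (p ^ n : ℕ) • y = x := by rw [hy, ← map_nsmul, key]
  have h1 : ((p ^ n : ℕ) : ℚ) * c = q := by
    have := congrArg (fun z : deltaP Q => (z : ℚ)) hysmul
    simpa [nsmul_eq_mul] using this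
  -- p does not divide c.den
  have hpden : ¬ p ∣ c.den := fun hd => hpQ (mem_deltaP.mp y.2 p hp0 hd)
  -- integer equation
  have hint : q.num * (c.den : ℤ) = (p : ℤ) ^ n * c.num * (q.den : ℤ) := by
    have h2 : ((p : ℚ)) ^ n * ((c.num : ℚ) / (c.den : ℚ)) = (q.num : ℚ) / (q.den : ℚ) := by
      rw [Rat.num_div_den, Rat.num_div_den]; push_cast at h1 ⊢; exact h1
    have hcd : ((c.den : ℚ)) ≠ 0 := by exact_mod_cast c.den_nz
    have hqd : ((q.den : ℚ)) ≠ 0 := by exact_mod_cast q.den_nz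
    field_simp at h2
    rw [mul_comm]
    exact_mod_cast h2.symm
  -- divisibility
  have hdvd : ((p : ℤ) ^ n) ∣ q.num * (c.den : ℤ) := ⟨c.num * (q.den : ℤ), by linarith [hint]⟩
  have hcop : IsCoprime ((p : ℤ) ^ n) ((c.den : ℤ)) := by
    apply IsCoprime.pow_left
    rw [Int.isCoprime_iff_gcd_eq_one, Int.gcd_natCast_natCast]
    exact (Nat.Prime.coprime_iff_not_dvd hp0).mpr hpden
  have hdvd2 : ((p : ℤ) ^ n) ∣ q.num := hcop.dvd_of_dvd_mul_right hdvd
  have hle : (p : ℤ) ^ n ≤ |q.num| :=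
    Int.le_of_dvd (abs_pos.mpr ha0) ((dvd_abs _ _).mpr hdvd2)
  have habs : |q.num| = (n : ℤ) := by rw [hn]; exact Int.abs_eq_natAbs q.num
  have h2n : (n : ℤ) < 2 ^ n := by exact_mod_cast Nat.lt_two_pow_self (n := n)
  have hp2 : (2 : ℤ) ^ n ≤ (p : ℤ) ^ n := by
    apply pow_le_pow_left₀ (by norm_num)
    exact_mod_cast hp0.two_le
  linarith

instance (P : Set ℕ) : Infinite (deltaP P) :=
  Infinite.of_injective (fun n : ℕ => (⟨(n : ℚ), natCast_mem_deltaP P n⟩ : deltaP P))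
    (fun _ _ h => Nat.cast_injective (Subtype.ext_iff.mp h))

instance (P : Set ℕ) : Infinite (Multiplicative (deltaP P)) :=
  inferInstanceAs (Infinite (deltaP P))

instance (P : Set ℕ) : Countable (Multiplicative (deltaP P)) :=
  inferInstanceAs (Countable (deltaP P))

open Classical in
/-- encoding of a set of naturals as a set of primes, giving an antichain. -/
noncomputable def pcode (A : Set ℕ) : Set ℕ :=
  {x | ∃ n, x = Nat.nth Nat.Prime (Nat.pair n (if n ∈ A then 0 else 1))}

lemma pcode_sep {A B : Set ℕ} (h : A ≠ B) :
    ∃ p : ℕ, p.Prime ∧ p ∈ pcode A ∧ p ∉ pcode B := by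
  classical
  have : ∃ n, ¬ (n ∈ A ↔ n ∈ B) := by
    by_contra hc
    push_neg at hc
    exact h (Set.ext hc)
  obtain ⟨n, hn⟩ := this
  have hbit : (if n ∈ A then 0 else 1) ≠ (if n ∈ B then (0:ℕ) else 1) := by
    by_cases h1 : n ∈ A <;> by_cases h2 : n ∈ B <;> simp [h1, h2] at hn ⊢
  refine ⟨Nat.nth Nat.Prime (Nat.pair n (if n ∈ A then 0 else 1)),
    Nat.prime_nth_prime _, ⟨n, rfl⟩, ?_⟩
  rintro ⟨m, hm⟩
  have := Nat.nth_injective Nat.infinite_setOf_prime hm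
  rw [Nat.pair_eq_pair] at this
  exact hbit (this.1 ▸ this.2)

/-- there exist `2 ^ ℵ₀` pairwise non-embeddable countably infinite groups. -/
theorem stmt_9 :
    ∃ (ι : Type) (G : ι → GrpCat),
      Cardinal.mk ι = 2 ^ Cardinal.aleph0 ∧
      (∀ i, Cardinal.mk (G i) = Cardinal.aleph0) ∧
      (∀ i j, i ≠ j → ¬ ∃ f : G i →* G j, Function.Injective f) := by
  refine ⟨Set ℕ, fun A => GrpCat.of (ULift (Multiplicative ↥(deltaP (pcode A)))), ?_, ?_, ?_⟩
  · rw [Cardinal.mk_set, Cardinal.mk_nat]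
  · intro A
    exact Cardinal.mk_eq_aleph0 (ULift (Multiplicative ↥(deltaP (pcode A))))
  · rintro A B hAB ⟨f, hf⟩
    obtain ⟨p, hp, hpA, hpB⟩ := pcode_sep hAB
    let g₀ : Multiplicative ↥(deltaP (pcode A)) →* Multiplicative ↥(deltaP (pcode B)) :=
      (MulEquiv.ulift.toMonoidHom.comp f).comp MulEquiv.ulift.symm.toMonoidHom
    have hg₀ : Function.Injective g₀ :=
      MulEquiv.ulift.injective.comp (hf.comp MulEquiv.ulift.symm.injective)
    exact no_embedding hp hpA hpB (AddMonoidHom.toMultiplicative.symm g₀) hg₀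
end

section
/- Let P and Q be disjoint sets of primes, G a group in which every element is a product of elements each of which is either of finite order or p-divisible in G for some p ∈ P, and H any group. If φ : G → Δ[Q] × H is an injective group homomorphism, then the image of φ is contained in {0} × H; in particular, G embeds into H. -/
lemma delta_mem_aux (Q : Set ℕ) (hQ : ∀ q ∈ Q, q.Prime) (p : ℕ) (hp : p.Prime)
    (hpQ : p ∉ Q) (x : ℚ) (hx : x ∈ Delta Q) :
    ∃ (m : ℤ) (d : ℕ), ¬ p ∣ d ∧ x * d = m := by
  induction hx using AddSubgroup.closure_induction with
  | mem y hy =>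
    obtain ⟨m, l, hl, rfl⟩ := hy
    refine ⟨m, l.prod, ?_, ?_⟩
    · intro hdvd
      obtain ⟨q, hq, hpq⟩ := (hp.prime.dvd_prod_iff).mp hdvd
      exact hpQ ((Nat.prime_dvd_prime_iff_eq hp (hQ q (hl q hq))).mp hpq ▸ hl q hq)
    · have hne : (l.prod : ℚ) ≠ 0 := by
        have : l.prod ≠ 0 := fun h =>
          (hQ 0 (hl 0 (List.prod_eq_zero_iff.mp h))).ne_zero rfl
        exact_mod_cast this
      exact div_mul_cancel₀ _ hne
  | zero => exact ⟨0, 1, by simp [hp.one_lt.ne'], by simp⟩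
  | add y z hy hz ihy ihz =>
    obtain ⟨m, d, hd, hmd⟩ := ihy
    obtain ⟨m', e, he, hme⟩ := ihz
    refine ⟨m * e + m' * d, d * e, ?_, ?_⟩
    · rw [hp.dvd_mul]; tauto
    · push_cast
      calc (y + z) * (d * e) = (y * d) * e + (z * e) * d := by ring
        _ = (m : ℚ) * e + m' * d := by rw [hmd, hme]
  | neg y hy ihy =>
    obtain ⟨m, d, hd, hmd⟩ := ihy
    exact ⟨-m, d, hd, by push_cast; linarith⟩

lemma delta_div_zero (Q : Set ℕ) (hQ : ∀ q ∈ Q, q.Prime) (p : ℕ) (hp : p.Prime)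
    (hpQ : p ∉ Q) (a : Delta Q) (h : ∀ n : ℕ, ∃ x : Delta Q, p ^ n • x = a) :
    a = 0 := by
  obtain ⟨m, d, hd, hmd⟩ := delta_mem_aux Q hQ p hp hpQ (a : ℚ) a.2
  have hdvd : ∀ n : ℕ, (p : ℤ) ^ n ∣ m := by
    intro n
    obtain ⟨x, hx⟩ := h n
    have hxq : (p : ℚ) ^ n * (x : ℚ) = (a : ℚ) := by
      have := congrArg (fun z : Delta Q => (z : ℚ)) hx
      simpa using this
    obtain ⟨m', e, he, hme⟩ := delta_mem_aux Q hQ p hp hpQ (x : ℚ) x.2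
    have key : (m : ℤ) * e = (p : ℤ) ^ n * (m' * d) := by
      have : (m : ℚ) * e = (p : ℚ) ^ n * (m' * d) := by
        calc (m : ℚ) * e = ((a : ℚ) * d) * e := by rw [hmd]
          _ = (p : ℚ) ^ n * ((x : ℚ) * e) * d := by rw [← hxq]; ring
          _ = (p : ℚ) ^ n * (m' * d) := by rw [hme]; ring
      exact_mod_cast this
    have hpe : ¬ (p : ℤ) ∣ (e : ℤ) := by exact_mod_cast he
    exact (Nat.prime_iff_prime_int.mp hp).pow_dvd_of_dvd_mul_right n hpe ⟨m' * d, key⟩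
  have hm0 : m = 0 := by
    by_contra hm
    have h1 := Int.le_of_dvd (abs_pos.mpr hm) ((dvd_abs _ _).mpr (hdvd m.natAbs))
    have h2 : (p : ℤ) ^ m.natAbs ≤ (m.natAbs : ℤ) := by rwa [Int.abs_eq_natAbs] at h1
    have h3 : (m.natAbs : ℤ) < (2 : ℤ) ^ m.natAbs := by exact_mod_cast Nat.lt_two_pow_self (n := m.natAbs)
    have h4 : (2 : ℤ) ^ m.natAbs ≤ (p : ℤ) ^ m.natAbs := by
      apply pow_le_pow_left₀ (by norm_num)
      exact_mod_cast hp.two_le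
    omega
  have hdne : (d : ℚ) ≠ 0 := by
    have : d ≠ 0 := fun h0 => hd (h0 ▸ dvd_zero p)
    exact_mod_cast this
  have : (a : ℚ) = 0 := by
    have := hmd
    rw [hm0] at this
    push_cast at this
    exact (mul_eq_zero.mp this).resolve_right hdne
  exact Subtype.ext this

/-- if `P, Q` are disjoint sets of primes, every element of `G` is a product
of elements which are of finite order or `p`-divisible for some `p ∈ P`, and
`φ : G → Δ[Q] × H` is an injective homomorphism, then the image of `φ` lies in `{0} × H`;
in particular `G` embeds into `H`. -/
theorem stmt_10 (P Q : Set ℕ) (hP : ∀ p ∈ P, p.Prime) (hQ : ∀ p ∈ Q, p.Prime)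
    (hdisj : Disjoint P Q)
    (G : Type*) [Group G] (H : Type*) [Group H]
    (hG : ∀ a : G, ∃ l : List G, a = l.prod ∧
      ∀ b ∈ l, IsOfFinOrder b ∨ ∃ p ∈ P, ∀ n : ℕ, ∃ x : G, x ^ p ^ n = b)
    (φ : G →* Multiplicative (Delta Q) × H) (hφ : Function.Injective φ) :
    (∀ g : G, (φ g).1 = 1) ∧ ∃ ψ : G →* H, Function.Injective ψ := by
  have hfst : ∀ g : G, (φ g).1 = 1 := by
    intro g
    obtain ⟨l, rfl, hl⟩ := hG g
    have : (φ l.prod).1 = (l.map (fun b => (φ b).1)).prod := by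
      rw [map_list_prod,
        show ((List.map φ l).prod).1
          = (MonoidHom.fst (Multiplicative (Delta Q)) H) (List.map φ l).prod from rfl,
        map_list_prod, List.map_map]
      rfl
    rw [this]
    apply List.prod_eq_one
    intro y hy
    simp only [List.mem_map] at hy
    obtain ⟨b, hb, rfl⟩ := hy
    rcases hl b hb with hfin | ⟨p, hpP, hdiv⟩
    · -- finite order
      obtain ⟨k, hk, hbk⟩ := isOfFinOrder_iff_pow_eq_one.mp (MonoidHom.isOfFinOrder φ hfin)
      have : (φ b).1 ^ k = 1 := by
        have := congrArg Prod.fst hbk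
        simpa using this
      -- torsion-free
      have hadd : k • Multiplicative.toAdd (φ b).1 = 0 := by
        have := congrArg Multiplicative.toAdd this
        simpa using this
      have : Multiplicative.toAdd (φ b).1 = 0 := by
        have hq : (k : ℚ) • ((Multiplicative.toAdd (φ b).1 : Delta Q) : ℚ) = 0 := by
          have := congrArg (fun z : Delta Q => (z : ℚ)) hadd
          push_cast at this ⊢
          simpa using this
        have := smul_eq_zero.mp hq
        rcases this with h | h
        · exact absurd (Nat.cast_eq_zero.mp (by exact_mod_cast h)) hk.ne'
        · exact Subtype.ext h
      calc (φ b).1 = Multiplicative.ofAdd (Multiplicative.toAdd (φ b).1) := rfl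
        _ = Multiplicative.ofAdd 0 := by rw [this]
        _ = 1 := rfl
    · -- p-divisible
      have hp := hP p hpP
      have hpQ : p ∉ Q := fun h => hdisj.ne_of_mem hpP h rfl
      have hz := delta_div_zero Q hQ p hp hpQ (Multiplicative.toAdd (φ b).1) ?_
      · calc (φ b).1 = Multiplicative.ofAdd (Multiplicative.toAdd (φ b).1) := rfl
          _ = Multiplicative.ofAdd 0 := by rw [hz]
          _ = 1 := rfl
      · intro n
        obtain ⟨x, hx⟩ := hdiv n
        refine ⟨Multiplicative.toAdd (φ x).1, ?_⟩
        have : (φ x).1 ^ p ^ n = (φ b).1 := by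
          have := congrArg Prod.fst (congrArg φ hx)
          simpa [map_pow] using this
        have := congrArg Multiplicative.toAdd this
        simpa using this
  refine ⟨hfst, (MonoidHom.snd _ _).comp φ, ?_⟩
  intro a b h
  apply hφ
  exact Prod.ext (by rw [hfst a, hfst b]) h
end

section
/- In a free product ∏* of a family of groups, every element g with reduced word length at least 1 satisfies: either g is conjugate to an element of one of the factors, or the reduced length of g^k is at least k for every k ≥ 2. -/
open Monoid in
/-- The reduced word length of an element of a free product. -/
noncomputable def wordLength {ι : Type*} {G : ι → Type*} [∀ i, Group (G i)]
    (g : CoprodI G) : ℕ :=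
  letI := Classical.decEq ι
  letI : ∀ i, DecidableEq (G i) := fun i => Classical.decEq _
  ((CoprodI.Word.equiv (M := G)) g).toList.length

open Monoid CoprodI

set_option linter.unusedSectionVars false
namespace Stmt11Aux

variable {ι : Type*} {G : ι → Type*} [∀ i, Group (G i)]

section dec
variable [DecidableEq ι] [∀ i, DecidableEq (G i)]

lemma equiv_prod (w : Word G) : Word.equiv w.prod = w :=
  Word.equiv.apply_symm_apply w

lemma prod_equiv (g : CoprodI G) : (Word.equiv g : Word G).prod = g :=
  Word.equiv.symm_apply_apply g

lemma rcons_length_le {i : ι} (p : Word.Pair G i) :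
    (Word.rcons p).toList.length ≤ p.tail.toList.length + 1 := by
  rw [Word.rcons]; split <;> simp [Word.cons]

lemma le_rcons_length {i : ι} (p : Word.Pair G i) :
    p.tail.toList.length ≤ (Word.rcons p).toList.length := by
  rw [Word.rcons]; split <;> simp [Word.cons]

lemma smul_length_le {i : ι} (m : G i) (w : Word G) :
    ((of m • w : Word G)).toList.length ≤ w.toList.length + 1 := by
  rw [Word.of_smul_def]
  show (Word.rcons ⟨m * (Word.equivPair i w).head, (Word.equivPair i w).tail,
      (Word.equivPair i w).fstIdx_ne⟩).toList.length ≤ _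
  refine (le_trans (rcons_length_le _) ?_)
  have h2 := le_rcons_length (Word.equivPair i w)
  have h3 : Word.rcons (Word.equivPair i w) = w := by
    rw [← Word.equivPair_symm, Equiv.symm_apply_apply]
  simp only [h3] at h2
  have : ((⟨m * (Word.equivPair i w).head, (Word.equivPair i w).tail,
      (Word.equivPair i w).fstIdx_ne⟩ : Word.Pair G i)).tail.toList.length
      = (Word.equivPair i w).tail.toList.length := rfl
  omega

lemma prod_smul_length_le (w v : Word G) :
    ((w.prod • v : Word G)).toList.length ≤ w.toList.length + v.toList.length := by
  induction w using Word.consRecOn with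
  | empty => simp
  | cons i m w h1 h2 ih =>
    rw [Word.prod_cons, mul_smul]
    refine (smul_length_le _ _).trans ?_
    simp only [Word.cons, List.length_cons]
    omega

lemma equiv_apply (g : CoprodI G) : (Word.equiv g : Word G) = g • (Word.empty : Word G) := rfl

lemma equiv_mul (g h : CoprodI G) :
    (Word.equiv (g * h) : Word G) = (Word.equiv g : Word G).prod • (Word.equiv h : Word G) := by
  rw [prod_equiv g, equiv_apply, equiv_apply h, mul_smul]

lemma equiv_mul_length (g h : CoprodI G) :
    (Word.equiv (g * h) : Word G).toList.length ≤
      (Word.equiv g : Word G).toList.length + (Word.equiv h : Word G).toList.length := by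
  rw [equiv_mul]; exact prod_smul_length_le _ _

end dec

/-- wordLength of a product of a word is the length of the word. -/
lemma wordLength_prod (w : Word G) : wordLength w.prod = w.toList.length := by
  letI := Classical.decEq ι
  letI : ∀ i, DecidableEq (G i) := fun i => Classical.decEq _
  unfold wordLength
  exact congrArg (List.length ∘ Word.toList) (equiv_prod w)

lemma wordLength_eq (g : CoprodI G) :
    letI := Classical.decEq ι
    letI : ∀ i, DecidableEq (G i) := fun i => Classical.decEq _
    wordLength g = (Word.equiv g : Word G).toList.length := rfl

lemma wordLength_mul_le (g h : CoprodI G) :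
    wordLength (g * h) ≤ wordLength g + wordLength h := by
  letI := Classical.decEq ι
  letI : ∀ i, DecidableEq (G i) := fun i => Classical.decEq _
  unfold wordLength
  exact equiv_mul_length g h

lemma wordLength_pow_le (g : CoprodI G) (n : ℕ) :
    wordLength (g ^ n) ≤ n * wordLength g := by
  induction n with
  | zero =>
    simp only [pow_zero, Nat.zero_mul, Nat.le_zero]
    have : wordLength (1 : CoprodI G) = wordLength ((Word.empty : Word G)).prod := by
      rw [Word.prod_empty]
    rw [this, wordLength_prod]
    rfl
  | succ n ih =>
    rw [pow_succ]
    calc wordLength (g ^ n * g) ≤ wordLength (g ^ n) + wordLength g := wordLength_mul_le _ _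
      _ ≤ n * wordLength g + wordLength g := Nat.add_le_add_right ih _
      _ = (n + 1) * wordLength g := by ring

/-- Appending two words with no index collision at the junction. -/
def wappend (w₁ w₂ : Word G)
    (h : (w₁.toList ++ w₂.toList).Chain' fun a b => a.1 ≠ b.1) : Word G where
  toList := w₁.toList ++ w₂.toList
  ne_one := by
    intro l hl
    rcases List.mem_append.mp hl with h' | h'
    · exact w₁.ne_one l h'
    · exact w₂.ne_one l h'
  chain_ne := h

lemma wappend_prod (w₁ w₂ : Word G) (h) :
    (wappend w₁ w₂ h).prod = w₁.prod * w₂.prod := by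
  simp [wappend, Word.prod, List.map_append, List.prod_append]

/-- Powers of a cyclically reduced word. -/
lemma exists_pow_word (w : Word G) (p q : ι)
    (hp : (w.toList.head?).map Sigma.fst = some p)
    (hq : (w.toList.getLast?).map Sigma.fst = some q) (hpq : p ≠ q) :
    ∀ n : ℕ, 1 ≤ n → ∃ u : Word G, u.prod = w.prod ^ n ∧
      u.toList.length = n * w.toList.length ∧
      (u.toList.head?).map Sigma.fst = some p ∧
      (u.toList.getLast?).map Sigma.fst = some q := by
  intro n hn
  induction n, hn using Nat.le_induction with
  | base => exact ⟨w, by rw [pow_one], by rw [one_mul], hp, hq⟩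
  | succ n hn ih =>
    obtain ⟨u, hup, hul, huh, huq⟩ := ih
    have hwne : w.toList ≠ [] := by
      intro h; rw [h] at hp; simp at hp
    have hune : u.toList ≠ [] := by
      intro h; rw [h] at huh; simp at huh
    have hchain : (w.toList ++ u.toList).Chain' fun a b => a.1 ≠ b.1 := by
      show List.IsChain _ _
      rw [List.isChain_append]
      refine ⟨w.chain_ne, u.chain_ne, ?_⟩
      intro x hx y hy
      have hx1 : x.1 = q := by
        rw [List.getLast?_eq_getLast hwne] at hq hx
        simp only [Option.map_some, Option.some.injEq] at hq
        simp only [Option.mem_def, Option.some.injEq] at hx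
        rw [← hx]; exact hq
      have hy1 : y.1 = p := by
        rw [List.head?_eq_head hune] at huh hy
        simp only [Option.map_some, Option.some.injEq] at huh
        simp only [Option.mem_def, Option.some.injEq] at hy
        rw [← hy]; exact huh
      rw [hx1, hy1]; exact hpq.symm
    refine ⟨wappend w u hchain, ?_, ?_, ?_, ?_⟩
    · rw [wappend_prod, hup, ← pow_succ']
    · show (w.toList ++ u.toList).length = _
      rw [List.length_append, hul]; ring
    · show ((w.toList ++ u.toList).head?).map Sigma.fst = some p
      rwa [List.head?_append_of_ne_nil _ hwne]
    · show ((w.toList ++ u.toList).getLast?).map Sigma.fst = some q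
      rwa [List.getLast?_append_of_ne_nil _ hune]

lemma wordLength_one : wordLength (1 : CoprodI G) = 0 := by
  have : wordLength (1 : CoprodI G) = wordLength ((Word.empty : Word G)).prod := by
    rw [Word.prod_empty]
  rw [this, wordLength_prod]
  rfl

lemma eq_one_of_wordLength_eq_zero {g : CoprodI G} (h : wordLength g = 0) : g = 1 := by
  letI := Classical.decEq ι
  letI : ∀ i, DecidableEq (G i) := fun i => Classical.decEq _
  have h1 : (Word.equiv g : Word G).toList = [] := List.length_eq_zero_iff.mp h
  have h2 : (Word.equiv g : Word G).prod = g := prod_equiv g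
  rw [Word.prod, h1] at h2
  simpa using h2.symm

lemma eq_of_of_wordLength_eq_one {g : CoprodI G} (h : wordLength g = 1) :
    ∃ (i : ι) (x : G i), g = of x := by
  letI := Classical.decEq ι
  letI : ∀ i, DecidableEq (G i) := fun i => Classical.decEq _
  obtain ⟨⟨i, x⟩, h1⟩ := List.length_eq_one_iff.mp (h : (Word.equiv g : Word G).toList.length = 1)
  have h2 : (Word.equiv g : Word G).prod = g := prod_equiv g
  rw [Word.prod, h1] at h2
  refine ⟨i, x, ?_⟩
  simpa using h2.symm

/-- Every element is conjugate to an element of length at most one, or to a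
cyclically reduced element. -/
lemma exists_cycred :
    ∀ (n : ℕ) (g : CoprodI G), wordLength g ≤ n →
    ∃ y c : CoprodI G, g = y * c * y⁻¹ ∧
      (wordLength c ≤ 1 ∨ ∃ (w : Word G) (p q : ι),
        w.prod = c ∧ (w.toList.head?).map Sigma.fst = some p ∧
        (w.toList.getLast?).map Sigma.fst = some q ∧ p ≠ q) := by
  intro n
  induction n with
  | zero =>
    intro g hgn
    exact ⟨1, g, by group, Or.inl (hgn.trans (by norm_num))⟩
  | succ n ih =>
    intro g hgn
    letI := Classical.decEq ι
    letI : ∀ i, DecidableEq (G i) := fun i => Classical.decEq _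
    have hgprod : (Word.equiv g : Word G).prod = g := prod_equiv g
    have hlen : wordLength g = (Word.equiv g : Word G).toList.length := rfl
    set w : Word G := Word.equiv g with hw
    rcases hli : w.toList with _ | ⟨x, t⟩
    · refine ⟨1, g, by group, Or.inl ?_⟩
      rw [hlen, hli]; simp
    · rcases List.eq_nil_or_concat' t with rfl | ⟨m, z, rfl⟩
      · refine ⟨1, g, by group, Or.inl ?_⟩
        rw [hlen, hli]; simp
      · obtain ⟨i, a⟩ := x
        obtain ⟨j, b⟩ := z
        by_cases hij : i = j
        · subst hij
          -- strictly shorten by conjugation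
          have hchain := w.chain_ne
          rw [hli] at hchain
          have h1 := List.isChain_cons.mp hchain
          have h2 := List.isChain_append.mp h1.2
          have hane : a ≠ 1 := w.ne_one ⟨i, a⟩ (by rw [hli]; simp)
          -- the middle word
          set wm : Word G :=
            ⟨m, fun l hl => w.ne_one l (by rw [hli]; simp [hl]), h2.1⟩ with hwm
          have hprod : g = of a * (wm.prod * of b) := by
            rw [← hgprod, Word.prod, hli]
            simp [Word.prod, List.map_append, List.prod_append, mul_assoc]
            rfl
          have hglen : wordLength g = m.length + 2 := by
            rw [hlen, hli]; simp
          have key : ∀ g' : CoprodI G, g' = of a⁻¹ * g * of a → wordLength g' ≤ n →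
              ∃ y c : CoprodI G, g = y * c * y⁻¹ ∧
              (wordLength c ≤ 1 ∨ ∃ (w : Word G) (p q : ι),
                w.prod = c ∧ (w.toList.head?).map Sigma.fst = some p ∧
                (w.toList.getLast?).map Sigma.fst = some q ∧ p ≠ q) := by
            intro g' hg'def hg'len
            obtain ⟨y, c, hyc, hc⟩ := ih g' hg'len
            refine ⟨of a * y, c, ?_, hc⟩
            have hga : g = of a * g' * (of a)⁻¹ := by
              rw [hg'def, map_inv]; group
            rw [hga, hyc]; group
          have hg'eq : of a⁻¹ * g * of a = wm.prod * of (b * a) := by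
            rw [hprod, map_mul, map_inv]; group
          by_cases hba : b * a = 1
          · refine key _ rfl ?_
            have : of a⁻¹ * g * of a = wm.prod := by rw [hg'eq, hba, map_one, mul_one]
            rw [this, wordLength_prod]
            have : wm.toList.length = m.length := rfl
            omega
          · -- appended word
            have hjunc : ∀ x ∈ m.getLast?, x.1 ≠ i := by
              intro x hx
              exact h2.2.2 x hx ⟨i, b⟩ (by simp)
            have hchain2 : (m ++ [⟨i, b * a⟩] : List (Σ i, G i)).IsChain
                (fun a b => a.1 ≠ b.1) := by
              rw [List.isChain_append]
              refine ⟨h2.1, List.isChain_singleton _, ?_⟩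
              intro x hx y hy
              simp only [List.head?_cons, Option.mem_def, Option.some.injEq] at hy
              rw [← hy]
              exact hjunc x hx
            set w' : Word G := ⟨m ++ [⟨i, b * a⟩],
              by
                intro l hl
                rcases List.mem_append.mp hl with h' | h'
                · exact w.ne_one l (by rw [hli]; simp [h'])
                · simp only [List.mem_singleton] at h'
                  subst h'
                  exact hba,
              hchain2⟩ with hw'
            have hw'prod : w'.prod = wm.prod * of (b * a) := by
              have hteq : w'.toList = m ++ [(⟨i, b * a⟩ : Σ i, G i)] := rfl
              rw [Word.prod, Word.prod, hteq]
              simp [List.map_append, List.prod_append]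
              rfl
            refine key w'.prod ?_ ?_
            · rw [hg'eq, hw'prod]
            · rw [wordLength_prod]
              have hteq : w'.toList = m ++ [(⟨i, b * a⟩ : Σ i, G i)] := rfl
              rw [hteq]
              simp only [List.length_append, List.length_singleton]
              omega
        · -- already cyclically reduced
          refine ⟨1, g, by group, Or.inr ?_⟩
          refine ⟨w, i, j, hgprod, ?_, ?_, hij⟩
          · rw [hli]; simp
          · rw [hli]
            have : ((⟨i,a⟩ :: (m ++ [⟨j,b⟩])) : List (Σ i, G i)).getLast? = some ⟨j, b⟩ := by
              rw [List.getLast?_eq_getLast (by simp)]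
              simp [List.getLast_append]
            rw [this]; simp

/-- Key length bound: the length of a conjugate of a power of a cyclically
reduced element. -/
lemma conj_pow_length (y c : CoprodI G) (w : Word G) (p q : ι)
    (hwc : w.prod = c) (hp : (w.toList.head?).map Sigma.fst = some p)
    (hq : (w.toList.getLast?).map Sigma.fst = some q) (hpq : p ≠ q)
    (m : ℕ) (hm : 1 ≤ m) :
    m * w.toList.length ≤ wordLength (y * c ^ m * y⁻¹) := by
  set L := wordLength y + wordLength y⁻¹ with hL
  set e := y * c ^ m * y⁻¹ with he
  have key : ∀ n : ℕ, 1 ≤ n → (m * n) * w.toList.length ≤ L + n * wordLength e := by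
    intro n hn
    have hen : e ^ n = y * c ^ (m * n) * y⁻¹ := by
      rw [he, conj_pow, ← pow_mul]
    obtain ⟨u, hup, hul, -, -⟩ := exists_pow_word w p q hp hq hpq (m * n)
      (Nat.one_le_iff_ne_zero.mpr (by positivity))
    have hcl : wordLength (c ^ (m * n)) = (m * n) * w.toList.length := by
      rw [← hwc, ← hup, wordLength_prod, hul]
    have hcy : c ^ (m * n) = y⁻¹ * e ^ n * y := by rw [hen]; group
    calc (m * n) * w.toList.length = wordLength (c ^ (m * n)) := hcl.symm
      _ = wordLength (y⁻¹ * e ^ n * y) := by rw [hcy]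
      _ ≤ wordLength (y⁻¹ * e ^ n) + wordLength y := wordLength_mul_le _ _
      _ ≤ wordLength y⁻¹ + wordLength (e ^ n) + wordLength y :=
          Nat.add_le_add_right (wordLength_mul_le _ _) _
      _ ≤ wordLength y⁻¹ + n * wordLength e + wordLength y :=
          Nat.add_le_add_right (Nat.add_le_add_left (wordLength_pow_le _ _) _) _
      _ ≤ L + n * wordLength e := by omega
  have hkey := key (L + 1) (by omega)
  have h2 : (L + 1) * (m * w.toList.length) < (L + 1) * (wordLength e + 1) := by
    calc (L + 1) * (m * w.toList.length) = (m * (L + 1)) * w.toList.length := by ring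
      _ ≤ L + (L + 1) * wordLength e := hkey
      _ < (L + 1) * (wordLength e + 1) := by ring_nf; omega
  have := Nat.lt_of_mul_lt_mul_left h2
  omega

end Stmt11Aux

open Monoid Stmt11Aux in
/-- in a free product, every element `g` of reduced length at least 1 is
either conjugate to an element of a factor, or satisfies `ℓ(g ^ k) ≥ k` for all `k ≥ 2`. -/
theorem stmt_11 {ι : Type*} [Nonempty ι] (G : ι → Type*) [∀ i, Group (G i)]
    (g : CoprodI G) (hg : 1 ≤ wordLength g) :
    (∃ (i : ι) (x : G i) (y : CoprodI G), g = y * CoprodI.of x * y⁻¹) ∨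
    (∀ k : ℕ, 2 ≤ k → k ≤ wordLength (g ^ k)) := by
  obtain ⟨y, c, hyc, hc⟩ := exists_cycred (wordLength g) g le_rfl
  rcases hc with hc | ⟨w, p, q, hwc, hp, hq, hpq⟩
  · interval_cases h : wordLength c
    · exfalso
      have := eq_one_of_wordLength_eq_zero h
      rw [this] at hyc
      simp only [mul_one] at hyc
      rw [hyc] at hg
      simp [wordLength_one] at hg
      -- hyc : g = y * 1 * y⁻¹
    · obtain ⟨i, x, hx⟩ := eq_of_of_wordLength_eq_one h
      exact Or.inl ⟨i, x, y, by rw [hyc, hx]⟩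
  · right
    intro k hk
    have hwne : w.toList ≠ [] := by intro h; rw [h] at hp; simp at hp
    have hl1 : 1 ≤ w.toList.length := List.length_pos_iff.mpr hwne
    have hb := conj_pow_length y c w p q hwc hp hq hpq k (by omega)
    have hgk : g ^ k = y * c ^ k * y⁻¹ := by rw [hyc, conj_pow]
    rw [← hgk] at hb
    calc k = k * 1 := by ring
      _ ≤ k * w.toList.length := Nat.mul_le_mul_left _ hl1
      _ ≤ wordLength (g ^ k) := hb
end

section
/- Let (G_i) be a nonempty family of groups and p a prime. If an element a of the free product ∏* G_i is p-divisible in the free product, then a is conjugate to an element b of some factor G_i such that b is p-divisible in G_i. -/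
set_option linter.unusedSectionVars false

namespace Stmt12Aux

open Monoid Monoid.CoprodI Monoid.CoprodI.Word

variable {ι : Type*} {G : ι → Type*} [∀ i, Group (G i)]
  [DecidableEq ι] [∀ i, DecidableEq (G i)]

/-- length of the reduced word of `x` -/
def len (x : CoprodI G) : ℕ := (Word.equiv x).toList.length

lemma equiv_prod (w : Word G) : Word.equiv (Word.prod w) = w :=
  Word.equiv.apply_symm_apply w

lemma prod_equiv (x : CoprodI G) : Word.prod (Word.equiv x) = x :=
  Word.equiv.symm_apply_apply x

lemma equiv_one : Word.equiv (1 : CoprodI G) = Word.empty := by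
  have : Word.equiv (1 : CoprodI G) = (1 : CoprodI G) • Word.empty := rfl
  rw [this, one_smul]

lemma len_one : len (1 : CoprodI G) = 0 := by simp [len, equiv_one]

lemma eq_one_of_len_eq_zero {x : CoprodI G} (h : len x = 0) : x = 1 := by
  have h1 : (Word.equiv x).toList = [] := List.length_eq_zero_iff.mp h
  have h2 : Word.equiv x = Word.empty := Word.ext h1
  have := prod_equiv x
  rw [h2] at this
  simpa using this.symm

lemma rcons_length_le {i : ι} (p : Pair G i) :
    (Word.rcons p).toList.length ≤ p.tail.toList.length + 1 := by
  rw [Word.rcons]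
  split <;> simp [Word.cons]

lemma rcons_length_ge {i : ι} (p : Pair G i) :
    p.tail.toList.length ≤ (Word.rcons p).toList.length := by
  rw [Word.rcons]
  split <;> simp [Word.cons]

lemma rcons_length_of_ne {i : ι} (p : Pair G i) (h : p.head ≠ 1) :
    (Word.rcons p).toList.length = p.tail.toList.length + 1 := by
  rw [Word.rcons]
  split
  · exact absurd ‹_› h
  · simp [Word.cons]

lemma equiv_mul (x y : CoprodI G) : Word.equiv (x * y) = x • Word.equiv y := by
  have h1 : Word.equiv (x * y) = (x * y) • Word.empty := rfl
  have h2 : Word.equiv y = y • Word.empty := rfl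
  rw [h1, h2, mul_smul]

lemma len_of_mul_le (i : ι) (m : G i) (x : CoprodI G) : len (of m * x) ≤ len x + 1 := by
  rw [len, equiv_mul, Word.of_smul_def]
  refine (rcons_length_le _).trans ?_
  have : Word.rcons (Word.equivPair i (Word.equiv x)) = Word.equiv x := by
    rw [← Word.equivPair_symm]
    exact (Word.equivPair i).symm_apply_apply (Word.equiv x)
  have h2 := rcons_length_ge (Word.equivPair i (Word.equiv x))
  rw [this] at h2
  exact Nat.succ_le_succ h2

lemma len_list_prod_mul_le (L : List (Σ i, G i)) (y : CoprodI G) :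
    len ((L.map fun l => of l.2).prod * y) ≤ L.length + len y := by
  induction L with
  | nil => simp
  | cons a L ih =>
    simp only [List.map_cons, List.prod_cons, List.length_cons, mul_assoc]
    calc len (of a.2 * ((L.map fun l => of l.2).prod * y))
        ≤ len ((L.map fun l => of l.2).prod * y) + 1 := len_of_mul_le _ _ _
      _ ≤ L.length + len y + 1 := by omega
      _ = L.length + 1 + len y := by omega

lemma len_mul_le (x y : CoprodI G) : len (x * y) ≤ len x + len y := by
  have hx : x = ((Word.equiv x).toList.map fun l => of l.2).prod := (prod_equiv x).symm
  calc len (x * y) = len ((((Word.equiv x).toList.map fun l => of l.2)).prod * y) := by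
        conv_lhs => rw [hx]
    _ ≤ (Word.equiv x).toList.length + len y := len_list_prod_mul_le _ _
    _ = len x + len y := rfl

/-- the inverse word: reverse the list and invert the letters -/
def invRev (w : Word G) : Word G where
  toList := (w.toList.map fun l => ⟨l.1, l.2⁻¹⟩).reverse
  ne_one := by
    intro l hl
    rw [List.mem_reverse, List.mem_map] at hl
    obtain ⟨l', hl', rfl⟩ := hl
    simpa using w.ne_one l' hl'
  chain_ne := by
    rw [List.isChain_reverse]
    refine (List.isChain_map _).mpr ?_
    refine w.chain_ne.imp ?_
    intro a b h
    exact fun hab => h (by exact hab.symm)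

lemma invRev_toList (w : Word G) :
    (invRev w).toList = (w.toList.map fun l => ⟨l.1, l.2⁻¹⟩).reverse := rfl

lemma prod_invRev_list (L : List (Σ i, G i)) :
    (List.map (fun l => of l.2) ((List.map (fun l => (⟨l.1, l.2⁻¹⟩ : Σ i, G i)) L).reverse)).prod
      = ((List.map (fun l => of l.2) L).prod)⁻¹ := by
  induction L with
  | nil => simp
  | cons a L ih =>
    simp only [List.map_cons, List.reverse_cons, List.map_append, List.prod_append,
      List.prod_cons, List.map_nil, List.prod_nil, mul_inv_rev, ih]
    simp

lemma prod_invRev (w : Word G) : Word.prod (invRev w) = (Word.prod w)⁻¹ := by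
  rw [Word.prod, Word.prod, invRev_toList]
  exact prod_invRev_list w.toList

lemma equiv_inv (x : CoprodI G) : Word.equiv x⁻¹ = invRev (Word.equiv x) := by
  apply Word.equiv.symm.injective
  show Word.prod _ = Word.prod _
  rw [prod_equiv, prod_invRev, prod_equiv]

lemma len_inv (x : CoprodI G) : len x⁻¹ = len x := by
  rw [len, equiv_inv, invRev_toList]
  simp [len]

lemma exists_head_decomp (x : CoprodI G) (hx : x ≠ 1) :
    ∃ (i : ι) (m : G i) (x' : CoprodI G), m ≠ 1 ∧ x = of m * x' ∧
      (Word.equiv x).toList = ⟨i, m⟩ :: (Word.equiv x').toList := by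
  obtain ⟨w, rfl⟩ : ∃ w : Word G, x = Word.prod w := ⟨Word.equiv x, (prod_equiv x).symm⟩
  induction w using Word.consRecOn with
  | empty => simp at hx
  | cons i m w h1 h2 _ =>
    refine ⟨i, m, Word.prod w, h2, ?_, ?_⟩
    · rw [Word.prod_cons]
    · rw [equiv_prod, equiv_prod]
      rfl

lemma equiv_of_toList {i : ι} (b : G i) (hb : b ≠ 1) :
    (Word.equiv (of b)).toList = [⟨i, b⟩] := by
  have h0 : Word.equiv (of b) = of b • Word.equiv (1 : CoprodI G) := by
    rw [← equiv_mul, mul_one]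
  rw [h0, equiv_one, Word.of_smul_def]
  have hp : Word.equivPair i (Word.empty : Word G) = ⟨1, Word.empty, by
      simp [Word.fstIdx, Word.empty]⟩ :=
    Word.equivPair_eq_of_fstIdx_ne (by simp [Word.fstIdx, Word.empty])
  rw [hp]
  simp only [mul_one]
  rw [Word.rcons, dif_neg hb]
  rfl

lemma len_of {i : ι} (b : G i) (hb : b ≠ 1) : len (of b) = 1 := by
  simp [len, equiv_of_toList b hb]

lemma of_eq_of {i j : ι} {b : G i} {c : G j} (hb : b ≠ 1) (h : of b = of c) :
    ∃ hij : i = j, hij ▸ b = c := by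
  have hc : c ≠ 1 := by
    rintro rfl
    rw [map_one] at h
    exact hb (CoprodI.of_injective i (by rw [h, map_one]))
  have hl : ([⟨i, b⟩] : List (Σ i, G i)) = [⟨j, c⟩] := by
    rw [← equiv_of_toList b hb, ← equiv_of_toList c hc, h]
  have hs : (⟨i, b⟩ : Σ i, G i) = ⟨j, c⟩ := by simpa using hl
  obtain ⟨rfl, h2⟩ := Sigma.mk.inj_iff.mp hs
  exact ⟨rfl, eq_of_heq h2⟩

lemma head_cancel {i : ι} (m : G i) (x : CoprodI G)
    (h : (Word.equiv x).toList.head? = some ⟨i, m⟩) :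
    ∃ x' : CoprodI G, x = of m * x' ∧
      (Word.equiv x').toList = (Word.equiv x).toList.tail ∧ m ≠ 1 := by
  have hx : x ≠ 1 := by
    rintro rfl
    rw [equiv_one] at h
    simp [Word.empty] at h
  obtain ⟨i', m', x', hm', rfl, hlist⟩ := exists_head_decomp x hx
  rw [hlist] at h
  simp only [List.head?_cons, Option.some.injEq] at h
  obtain ⟨rfl, h2⟩ := Sigma.mk.inj_iff.mp h.symm
  obtain rfl := eq_of_heq h2
  exact ⟨x', rfl, by simp [hlist], hm'⟩

lemma len_of_mul_le_of_fstIdx {i : ι} (m : G i) (x : CoprodI G)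
    (h : Word.fstIdx (Word.equiv x) = some i) : len (of m * x) ≤ len x := by
  rw [len, equiv_mul, Word.of_smul_def]
  set P := Word.equivPair i (Word.equiv x) with hP
  have hr : Word.rcons P = Word.equiv x := by
    rw [hP, ← Word.equivPair_symm]
    exact (Word.equivPair i).symm_apply_apply (Word.equiv x)
  have hhead : P.head ≠ 1 := by
    intro h1
    have h2 : Word.rcons P = P.tail := by rw [Word.rcons, dif_pos h1]
    rw [h2] at hr
    exact P.fstIdx_ne (hr ▸ h)
  have hlen := rcons_length_of_ne P hhead
  rw [hr] at hlen
  calc (Word.rcons ⟨m * P.head, P.tail, P.fstIdx_ne⟩).toList.length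
      ≤ P.tail.toList.length + 1 := rcons_length_le _
    _ = (Word.equiv x).toList.length := hlen.symm

lemma fstIdx_equiv_inv (x : CoprodI G) :
    Word.fstIdx (Word.equiv x⁻¹) = ((Word.equiv x).toList.getLast?).map Sigma.fst := by
  rw [equiv_inv]
  show (((Word.equiv x).toList.map fun l => (⟨l.1, l.2⁻¹⟩ : Σ i, G i)).reverse).head?.map
    Sigma.fst = _
  rw [List.head?_reverse, List.getLast?_map]
  cases (Word.equiv x).toList.getLast? <;> rfl

lemma len_mul_of_le {i : ι} (m : G i) (x : CoprodI G)
    (h : Word.fstIdx (Word.equiv x⁻¹) = some i) : len (x * of m) ≤ len x := by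
  have h1 : len (x * of m) = len ((x * of m)⁻¹) := (len_inv _).symm
  rw [h1, mul_inv_rev]
  have h2 : (of m : CoprodI G)⁻¹ = of m⁻¹ := by rw [← map_inv]
  rw [h2]
  calc len (of m⁻¹ * x⁻¹) ≤ len x⁻¹ := len_of_mul_le_of_fstIdx _ _ h
    _ = len x := len_inv x

lemma len_neword {i j : ι} (W : NeWord G i j) : len W.prod = W.toList.length := by
  have h : Word.equiv W.prod = W.toWord := equiv_prod _
  rw [len, h]
  rfl

lemma neword_len_le_one {i j : ι} (W : NeWord G i j) (h : W.toList.length ≤ 1) :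
    ∃ b : G i, W.prod = of b := by
  cases W with
  | singleton x hx => exact ⟨x, by simp⟩
  | append w₁ hne w₂ =>
    exfalso
    have h1 := w₁.toList_ne_nil
    have h2 := w₂.toList_ne_nil
    have hh : (NeWord.append w₁ hne w₂).toList = w₁.toList ++ w₂.toList := rfl
    rw [hh, List.length_append] at h
    have l1 := List.length_pos_iff.mpr h1
    have l2 := List.length_pos_iff.mpr h2
    omega

lemma neword_pow {i j : ι} (hij : i ≠ j) (W : NeWord G i j) (k : ℕ) :
    ∃ V : NeWord G i j, V.prod = W.prod ^ (k + 1) ∧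
      V.toList.length = (k + 1) * W.toList.length := by
  induction k with
  | zero => exact ⟨W, by simp, by simp⟩
  | succ k ih =>
    obtain ⟨V, hV, hl⟩ := ih
    refine ⟨NeWord.append W (Ne.symm hij) V, ?_, ?_⟩
    · rw [NeWord.append_prod, hV, ← pow_succ']
    · show (W.toList ++ V.toList).length = _
      rw [List.length_append, hl]
      ring

lemma len_pow_le (x : CoprodI G) (N : ℕ) : len (x ^ N) ≤ N * len x := by
  induction N with
  | zero => simp [len_one]
  | succ N ih =>
    rw [pow_succ]
    calc len (x ^ N * x) ≤ len (x ^ N) + len x := len_mul_le _ _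
      _ ≤ N * len x + len x := by omega
      _ = (N + 1) * len x := by ring

lemma conj_classification [Nonempty ι] :
    ∀ (fuel : ℕ) (x : CoprodI G), len x ≤ fuel →
    (∃ (i : ι) (b : G i) (u : CoprodI G), x = u * of b * u⁻¹) ∨
    (∃ (i j : ι) (_ : i ≠ j) (W : NeWord G i j) (u : CoprodI G), x = u * W.prod * u⁻¹) := by
  intro fuel
  induction fuel with
  | zero =>
    intro x hx
    left
    have h1 := eq_one_of_len_eq_zero (Nat.le_zero.mp hx)
    exact ⟨Classical.arbitrary ι, 1, 1, by simp [h1]⟩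
  | succ fuel ih =>
    intro x hx
    by_cases hx1 : x = 1
    · left; exact ⟨Classical.arbitrary ι, 1, 1, by simp [hx1]⟩
    have hne : Word.equiv x ≠ Word.empty := by
      intro h
      apply hx1
      rw [← prod_equiv x, h, Word.prod_empty]
    obtain ⟨s, t, W, hW⟩ := NeWord.of_word (Word.equiv x) hne
    have hxW : W.prod = x := by rw [NeWord.prod, hW, prod_equiv]
    by_cases hst : s = t
    case neg => right; exact ⟨s, t, hst, W, 1, by simp [hxW]⟩
    case pos =>
      subst hst
      by_cases hlen : len x ≤ 1
      · obtain ⟨b, hb⟩ := neword_len_le_one W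
          (by rw [← len_neword W, hxW]; exact hlen)
        left
        exact ⟨s, b, 1, by simp [← hxW, hb]⟩
      · push_neg at hlen
        set m := W.head with hm
        have hhead : (Word.equiv x).toList.head? = some ⟨s, m⟩ := by
          rw [← hW]; exact W.toList_head?
        obtain ⟨x', hx'eq, hx'list, hm1⟩ := head_cancel m x hhead
        have hxne : (Word.equiv x).toList ≠ [] := by
          intro hnil; rw [hnil] at hhead; simp at hhead
        have hlenx' : len x' + 1 = len x := by
          rw [len, hx'list, len]
          rcases hh : (Word.equiv x).toList with _ | ⟨a, l⟩
          · exact absurd hh hxne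
          · simp
        have hlast : (Word.equiv x).toList.getLast? = some ⟨s, W.last⟩ := by
          rw [← hW]; exact W.toList_getLast?
        have hx'ne : (Word.equiv x').toList ≠ [] := by
          intro hnil
          rw [len, hnil] at hlenx'
          simp at hlenx'
          omega
        have hx'last : (Word.equiv x').toList.getLast? = some ⟨s, W.last⟩ := by
          rw [hx'list]
          obtain ⟨y0, l', hyl⟩ := List.exists_cons_of_ne_nil hxne
          rw [hyl] at hlast ⊢
          rw [hx'list, hyl] at hx'ne
          obtain ⟨y1, l'', rfl⟩ := List.exists_cons_of_ne_nil (by simpa using hx'ne)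
          rw [List.getLast?_cons_cons] at hlast
          simpa using hlast
        set x2 := (of m)⁻¹ * x * of m with hx2def
        have hx2 : x2 = x' * of m := by
          rw [hx2def, hx'eq]
          group
        have hlen2 : len x2 ≤ len x' := by
          rw [hx2]
          apply len_mul_of_le
          rw [fstIdx_equiv_inv, hx'last]
          rfl
        have hfuel : len x2 ≤ fuel := by omega
        have hxx2 : x = of m * x2 * (of m)⁻¹ := by rw [hx2def]; group
        rcases ih x2 hfuel with ⟨i, b, u, hu⟩ | ⟨i, j, hij, V, u, hu⟩
        · left
          refine ⟨i, b, of m * u, ?_⟩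
          rw [hxx2, hu]
          group
        · right
          refine ⟨i, j, hij, V, of m * u, ?_⟩
          rw [hxx2, hu]
          group

lemma pow_not_conj_neword {i j : ι} (hij : i ≠ j) (W : NeWord G i j) (u a : CoprodI G)
    (e : ℕ) (he : 1 ≤ e) (hx : ∀ N : ℕ, a ^ N = u * W.prod ^ (e * N) * u⁻¹)
    (hea : len a < e) : False := by
  set N := 2 * len u + 1 with hN
  have heN : 1 ≤ e * N := Nat.mul_pos he (by omega)
  obtain ⟨V, hV, hVl⟩ := neword_pow hij W (e * N - 1)
  have hVe : V.prod = W.prod ^ (e * N) := by rw [hV]; congr 1; omega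
  have hlenV : len (W.prod ^ (e * N)) = (e * N) * W.toList.length := by
    rw [← hVe, len_neword, hVl]; congr 1; omega
  have hWlen : 1 ≤ W.toList.length := List.length_pos_iff.mpr W.toList_ne_nil
  have h1 : W.prod ^ (e * N) = u⁻¹ * a ^ N * u := by rw [hx N]; group
  have h2 : len (W.prod ^ (e * N)) ≤ len u + len (a ^ N) + len u := by
    rw [h1]
    calc len (u⁻¹ * a ^ N * u) ≤ len (u⁻¹ * a ^ N) + len u := len_mul_le _ _
      _ ≤ len u⁻¹ + len (a ^ N) + len u := by
          have := len_mul_le u⁻¹ (a ^ N); omega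
      _ = len u + len (a ^ N) + len u := by rw [len_inv]
  have h3 : len (a ^ N) ≤ N * len a := len_pow_le a N
  have h4 : e * N ≤ e * N * W.toList.length := Nat.le_mul_of_pos_right _ (by omega)
  have h5 : e * N ≤ 2 * len u + N * len a := by
    rw [hlenV] at h2; omega
  have h6 : N * (len a + 1) ≤ N * e := Nat.mul_le_mul_left N (by omega)
  have h7 : N * e = e * N := Nat.mul_comm _ _
  have h8 : N * (len a + 1) = N * len a + N := by ring
  omega

lemma conj_of_fuel : ∀ (fuel : ℕ) (g : CoprodI G), len g ≤ fuel →
    ∀ {i j : ι} (b : G i) (c : G j), b ≠ 1 → g * of b * g⁻¹ = of c →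
    ∃ (hij : i = j) (w : G j), c = w * (hij ▸ b) * w⁻¹ := by
  intro fuel
  induction fuel with
  | zero =>
    intro g hg i j b c hb h
    have hg1 := eq_one_of_len_eq_zero (Nat.le_zero.mp hg)
    subst hg1
    rw [one_mul, inv_one, mul_one] at h
    obtain ⟨hij, hbc⟩ := of_eq_of hb h
    subst hij
    exact ⟨rfl, 1, by simpa using hbc.symm⟩
  | succ fuel ih =>
    intro g hg i j b c hb h
    by_cases hg1 : g = 1
    · subst hg1
      rw [one_mul, inv_one, mul_one] at h
      obtain ⟨hij, hbc⟩ := of_eq_of hb h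
      subst hij
      exact ⟨rfl, 1, by simpa using hbc.symm⟩
    have hc : c ≠ 1 := by
      rintro rfl
      rw [map_one] at h
      have hob : of b = (1 : CoprodI G) := by
        have h2 : of b = g⁻¹ * (g * of b * g⁻¹) * g := by group
        rw [h2, h]
        group
      exact hb (CoprodI.of_injective i (by rw [hob, map_one]))
    have hne : Word.equiv g ≠ Word.empty := by
      intro hnil
      apply hg1
      rw [← prod_equiv g, hnil, Word.prod_empty]
    obtain ⟨s, t, W, hW⟩ := NeWord.of_word (Word.equiv g) hne
    have hgW : W.prod = g := by rw [NeWord.prod, hW, prod_equiv]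
    by_cases hti : t = i
    case neg =>
      exfalso
      set V := NeWord.append (NeWord.append W hti (NeWord.singleton b hb)) (Ne.symm hti) W.inv
        with hVdef
      have hV : V.prod = of c := by
        rw [hVdef, NeWord.append_prod, NeWord.append_prod, NeWord.prod_singleton,
          NeWord.inv_prod, hgW, h]
      have hlen : len (of c) = V.toList.length := by rw [← hV, len_neword]
      rw [len_of c hc] at hlen
      have hVl : V.toList = (W.toList ++ [⟨i, b⟩]) ++ W.inv.toList := rfl
      have l1 := List.length_pos_iff.mpr W.toList_ne_nil
      have l2 := List.length_pos_iff.mpr W.inv.toList_ne_nil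
      rw [hVl] at hlen
      simp only [List.length_append, List.length_singleton] at hlen
      omega
    case pos =>
      subst hti
      have hlast : (Word.equiv g).toList.getLast? = some ⟨t, W.last⟩ := by
        rw [← hW]; exact W.toList_getLast?
      have hginv_head : (Word.equiv g⁻¹).toList.head? = some ⟨t, W.last⁻¹⟩ := by
        rw [equiv_inv, invRev_toList, List.head?_reverse, List.getLast?_map, hlast]
        rfl
      obtain ⟨r, hr_eq, hr_list, hm1⟩ := head_cancel W.last⁻¹ g⁻¹ hginv_head
      set m := W.last with hmdef
      have hgne : (Word.equiv g⁻¹).toList ≠ [] := by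
        intro hnil; rw [hnil] at hginv_head; simp at hginv_head
      have hlenr : len r + 1 = len g⁻¹ := by
        rw [len, hr_list, len]
        rcases hh : (Word.equiv g⁻¹).toList with _ | ⟨a0, l0⟩
        · exact absurd hh hgne
        · simp
      have hlenr' : len r⁻¹ ≤ fuel := by
        rw [len_inv]
        rw [len_inv] at hlenr
        omega
      have hgeq : g = r⁻¹ * of m := by
        have h2 : g⁻¹ = of m⁻¹ * r := by rw [hr_eq]
        have h3 : g = (of m⁻¹ * r)⁻¹ := by rw [← h2, inv_inv]
        rw [h3, mul_inv_rev, ← map_inv, inv_inv]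
      set b' := m * b * m⁻¹ with hb'def
      have hb' : b' ≠ 1 := by
        rw [hb'def]
        intro hone
        apply hb
        have : b = m⁻¹ * (m * b * m⁻¹) * m := by group
        rw [this, hone]
        group
      have h' : r⁻¹ * of b' * (r⁻¹)⁻¹ = of c := by
        rw [hb'def, map_mul, map_mul, map_inv, ← h, hgeq]
        group
      obtain ⟨hij, w, hcw⟩ := ih r⁻¹ hlenr' b' c hb' h'
      subst hij
      refine ⟨rfl, w * m, ?_⟩
      have hcw2 : c = w * (m * b * m⁻¹) * w⁻¹ := hcw
      rw [hcw2]
      group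

lemma conj_into_factor [Nonempty ι] (a : CoprodI G) (e : ℕ) (he : len a < e)
    (x : CoprodI G) (hx : x ^ e = a) :
    ∃ (i : ι) (g : G i) (u : CoprodI G), x = u * of g * u⁻¹ := by
  rcases conj_classification (len x) x le_rfl with h | ⟨i, j, hij, W, u, hxw⟩
  · exact h
  · exfalso
    refine pow_not_conj_neword hij W u a e (by omega) ?_ he
    intro N
    rw [← hx, ← pow_mul, hxw, conj_pow]

end Stmt12Aux

open Monoid in
/-- if an element `a` of a free product is `p`-divisible (`p` prime) in the
free product, then `a` is conjugate to an element `b` of some factor `G i` such that `b`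
is `p`-divisible in `G i`. -/
theorem stmt_12 {ι : Type*} [Nonempty ι] (G : ι → Type*) [∀ i, Group (G i)]
    (p : ℕ) (hp : p.Prime) (a : CoprodI G)
    (ha : ∀ n : ℕ, ∃ x : CoprodI G, x ^ p ^ n = a) :
    ∃ (i : ι) (b : G i) (y : CoprodI G),
      a = y * CoprodI.of b * y⁻¹ ∧ ∀ n : ℕ, ∃ c : G i, c ^ p ^ n = b := by
  classical
  by_cases ha1 : a = 1
  · exact ⟨Classical.arbitrary ι, 1, 1, by simp [ha1], fun n => ⟨1, one_pow _⟩⟩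
  · have hp1 : 1 < p := hp.one_lt
    set n₀ := Stmt12Aux.len a with hn₀def
    have hn₀ : Stmt12Aux.len a < p ^ n₀ := Nat.lt_pow_self hp1
    obtain ⟨x, hx⟩ := ha n₀
    obtain ⟨i, g, y, hxy⟩ := Stmt12Aux.conj_into_factor a (p ^ n₀) hn₀ x hx
    have hab : a = y * CoprodI.of (g ^ p ^ n₀) * y⁻¹ := by
      rw [← hx, hxy, conj_pow, ← map_pow]
    set b := g ^ p ^ n₀ with hbdef
    have hbne : b ≠ 1 := by
      intro h1
      apply ha1
      rw [hab, h1, map_one]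
      group
    refine ⟨i, b, y, hab, ?_⟩
    intro nn
    obtain ⟨x', hx'⟩ := ha (n₀ + nn)
    have hlt : Stmt12Aux.len a < p ^ (n₀ + nn) :=
      lt_of_lt_of_le hn₀ (Nat.pow_le_pow_right (le_of_lt hp1) (Nat.le_add_right _ _))
    obtain ⟨j, h0, z, hxz⟩ := Stmt12Aux.conj_into_factor a _ hlt x' hx'
    have hac : a = z * CoprodI.of (h0 ^ p ^ (n₀ + nn)) * z⁻¹ := by
      rw [← hx', hxz, conj_pow, ← map_pow]
    set c := h0 ^ p ^ (n₀ + nn) with hcdef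
    have hof : (z⁻¹ * y) * CoprodI.of b * (z⁻¹ * y)⁻¹ = CoprodI.of c := by
      have h1 : y * CoprodI.of b * y⁻¹ = z * CoprodI.of c * z⁻¹ := by rw [← hab, ← hac]
      have h2 : CoprodI.of c = z⁻¹ * (z * CoprodI.of c * z⁻¹) * z := by group
      rw [h2, ← h1]
      group
    obtain ⟨hij, w, hcw⟩ :=
      Stmt12Aux.conj_of_fuel (Stmt12Aux.len (z⁻¹ * y)) _ le_rfl b c hbne hof
    subst hij
    have hcw' : c = w * b * w⁻¹ := hcw
    refine ⟨(w⁻¹ * h0 * w) ^ p ^ n₀, ?_⟩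
    have hbc : b = w⁻¹ * c * w := by rw [hcw']; group
    have hconj : (w⁻¹ * h0 * w) ^ p ^ (n₀ + nn) = w⁻¹ * h0 ^ p ^ (n₀ + nn) * w := by
      have hcp := @conj_pow _ _ (p ^ (n₀ + nn)) w⁻¹ h0
      simpa [inv_inv] using hcp
    calc ((w⁻¹ * h0 * w) ^ p ^ n₀) ^ p ^ nn
        = (w⁻¹ * h0 * w) ^ (p ^ n₀ * p ^ nn) := by rw [← pow_mul]
      _ = (w⁻¹ * h0 * w) ^ p ^ (n₀ + nn) := by rw [pow_add]
      _ = w⁻¹ * h0 ^ p ^ (n₀ + nn) * w := hconj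
      _ = w⁻¹ * c * w := by rw [hcdef]
      _ = b := hbc.symm
end

section
/- Let P₁ and P₂ be nonempty sets of primes and let G₁ = ∏*_{p∈P₁} ℤ[1/p] and G₂ = ∏*_{p∈P₂} ℤ[1/p] be the free products of the corresponding subgroups of ℚ. If P₁ ⊄ P₂ then G₁ does not embed into G₂. -/
/-- `ℤ[1/p] = { m / p ^ k : m ∈ ℤ, k ∈ ℕ }` as an additive subgroup of `ℚ`
(isomorphic to the multiplicative group `Γ_p = { e ^ (n p ^ k) : n, k ∈ ℤ }`). -/
def Zinv (p : ℕ) : AddSubgroup ℚ :=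
  AddSubgroup.closure {x : ℚ | ∃ (m : ℤ) (k : ℕ), x = (m : ℚ) / (p : ℚ) ^ k}


namespace FPaux
open Monoid Monoid.CoprodI Monoid.CoprodI.Word

variable {ι : Type*} [DecidableEq ι] {G : ι → Type*} [∀ i, Group (G i)]
  [∀ i, DecidableEq (G i)]

/-- Length of the reduced word of an element. -/
noncomputable def len (x : CoprodI G) : ℕ := (Word.equiv (M := G) x).toList.length

lemma prod_eq_symm (w : Word G) : Word.prod w = (Word.equiv (M := G)).symm w := rfl

lemma equiv_prod (w : Word G) : Word.equiv (M := G) (Word.prod w) = w := by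
  rw [prod_eq_symm, Equiv.apply_symm_apply]

lemma prod_equiv (x : CoprodI G) : Word.prod (Word.equiv (M := G) x) = x := by
  rw [prod_eq_symm, Equiv.symm_apply_apply]

lemma len_prod (w : Word G) : len (Word.prod w) = w.toList.length := by
  rw [len, equiv_prod]

lemma len_one : len (1 : CoprodI G) = 0 := by
  have : (1 : CoprodI G) = Word.prod Word.empty := by simp
  rw [this, len_prod]; rfl

lemma eq_one_of_len_eq_zero {x : CoprodI G} (h : len x = 0) : x = 1 := by
  have h' : (Word.equiv (M := G) x).toList = [] := List.length_eq_zero_iff.mp h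
  have : Word.equiv (M := G) x = Word.empty := Word.ext h'
  have := congrArg Word.prod this
  rwa [prod_equiv, prod_empty] at this

end FPaux
namespace FPaux
open Monoid Monoid.CoprodI Monoid.CoprodI.Word

variable {ι : Type*} [DecidableEq ι] {G : ι → Type*} [∀ i, Group (G i)]
  [∀ i, DecidableEq (G i)]

/-- singleton word -/
def singleW {i : ι} (m : G i) (hm : m ≠ 1) : Word G :=
  ⟨[⟨i, m⟩], by simpa using hm, List.isChain_singleton _⟩

lemma prod_singleW {i : ι} (m : G i) (hm : m ≠ 1) : Word.prod (singleW m hm) = of m := by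
  simp [singleW, Word.prod]

lemma len_of_le {i : ι} (m : G i) : len (of (M := G) m) ≤ 1 := by
  by_cases hm : m = 1
  · subst hm; simp only [map_one]; rw [len_one]; omega
  · rw [← prod_singleW m hm, len_prod]; simp [singleW]

lemma rcons_length_le {i : ι} (p : Pair G i) :
    (Word.rcons p).toList.length ≤ p.tail.toList.length + 1 := by
  rw [Word.rcons]
  split_ifs <;> simp [Word.cons]

lemma rcons_length_ge {i : ι} (p : Pair G i) :
    p.tail.toList.length ≤ (Word.rcons p).toList.length := by
  rw [Word.rcons]
  split_ifs <;> simp [Word.cons]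

lemma equivPair_tail_length_le {i : ι} (w : Word G) :
    (Word.equivPair i w).tail.toList.length ≤ w.toList.length := by
  have h : Word.rcons (Word.equivPair i w) = w := by
    rw [← Word.equivPair_symm, Equiv.symm_apply_apply]
  calc (Word.equivPair i w).tail.toList.length
      ≤ (Word.rcons (Word.equivPair i w)).toList.length := rcons_length_ge _
    _ = w.toList.length := by rw [h]

lemma len_smul_le {i : ι} (m : G i) (w : Word G) :
    (of m • w).toList.length ≤ w.toList.length + 1 := by
  rw [Word.of_smul_def]
  refine le_trans (rcons_length_le _) ?_
  exact Nat.add_le_add_right (equivPair_tail_length_le w) 1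

lemma equiv_of_mul (m : CoprodI G) (x : CoprodI G) :
    Word.equiv (M := G) (m * x) = m • Word.equiv (M := G) x := by
  have : m * x = Word.prod (m • Word.equiv (M := G) x) := by
    rw [Word.prod_smul, prod_equiv]
  rw [this, equiv_prod]

lemma len_of_mul_le {i : ι} (m : G i) (x : CoprodI G) : len (of m * x) ≤ len x + 1 := by
  rw [len, equiv_of_mul]
  exact len_smul_le m _

lemma len_of_mul_le' {i : ι} (m : G i) (x : CoprodI G)
    (hx : (Word.equiv (M := G) x).fstIdx = some i) : len (of m * x) ≤ len x := by
  rw [len, equiv_of_mul]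
  set w := Word.equiv (M := G) x with hw
  have hr : Word.rcons (Word.equivPair i w) = w := by
    rw [← Word.equivPair_symm, Equiv.symm_apply_apply]
  have hhead : (Word.equivPair i w).head ≠ 1 := by
    intro h1
    have htail : w = (Word.equivPair i w).tail := by
      conv_lhs => rw [← hr]
      rw [Word.rcons, dif_pos h1]
    have h2 := (Word.equivPair i w).fstIdx_ne
    rw [← htail] at h2
    exact h2 hx
  have hlen : w.toList.length = (Word.equivPair i w).tail.toList.length + 1 := by
    conv_lhs => rw [← hr]
    rw [Word.rcons, dif_neg hhead]
    simp [Word.cons]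
  rw [Word.of_smul_def]
  refine le_trans (rcons_length_le _) ?_
  have hx' : len x = w.toList.length := rfl
  rw [hx', hlen]

end FPaux
namespace FPaux
open Monoid Monoid.CoprodI Monoid.CoprodI.Word

variable {ι : Type*} [DecidableEq ι] {G : ι → Type*} [∀ i, Group (G i)]
  [∀ i, DecidableEq (G i)]

lemma len_list_mul_le (L : List (Σ i, G i)) (y : CoprodI G) :
    len ((L.map fun a => of (M := G) a.2).prod * y) ≤ L.length + len y := by
  induction L with
  | nil => simp
  | cons a L ih =>
      rw [List.map_cons, List.prod_cons, mul_assoc]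
      calc len (of a.2 * ((L.map fun a => of (M := G) a.2).prod * y))
          ≤ ((L.map fun a => of (M := G) a.2).prod * y |> len) + 1 := len_of_mul_le _ _
        _ ≤ L.length + len y + 1 := by exact Nat.add_le_add_right ih 1
        _ = (a :: L).length + len y := by simp [List.length_cons]; omega

lemma prod_as_list (x : CoprodI G) :
    ((Word.equiv (M := G) x).toList.map fun a => of (M := G) a.2).prod = x :=
  prod_equiv x

lemma len_mul_le (x y : CoprodI G) : len (x * y) ≤ len x + len y := by
  conv_lhs => rw [← prod_as_list x]
  exact len_list_mul_le _ y

/-- inverse word -/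
def invW (w : Word G) : Word G :=
  ⟨(w.toList.map fun l => (⟨l.1, l.2⁻¹⟩ : Σ i, G i)).reverse, by
    intro l hl
    rw [List.mem_reverse, List.mem_map] at hl
    obtain ⟨a, ha, rfl⟩ := hl
    simpa using w.ne_one a ha, by
    rw [List.isChain_reverse]
    refine (List.isChain_map _).mpr ?_
    refine w.chain_ne.imp ?_
    intro a b h
    exact fun hh => h hh.symm⟩

lemma prod_invW (w : Word G) : Word.prod (invW w) = (Word.prod w)⁻¹ := by
  rw [Word.prod, invW, Word.prod]
  simp only [List.map_reverse, List.map_map]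
  rw [List.prod_inv_reverse]
  congr 2
  rw [List.map_map]
  exact List.map_congr_left fun a _ => by simp

lemma len_inv (x : CoprodI G) : len x⁻¹ = len x := by
  have h : x⁻¹ = Word.prod (invW (Word.equiv (M := G) x)) := by
    rw [prod_invW, prod_equiv]
  rw [h, len_prod, invW]
  simp [len]

end FPaux
namespace FPaux
open Monoid Monoid.CoprodI Monoid.CoprodI.Word

variable {ι : Type*} [DecidableEq ι] {G : ι → Type*} [∀ i, Group (G i)]
  [∀ i, DecidableEq (G i)]

/-- Append two reduced words whose junction indices differ. -/
def appendW (w₁ w₂ : Word G)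
    (h : ∀ a ∈ w₁.toList.getLast?, ∀ b ∈ w₂.toList.head?, a.1 ≠ b.1) : Word G :=
  ⟨w₁.toList ++ w₂.toList, by
    intro l hl
    rcases List.mem_append.mp hl with h' | h'
    · exact w₁.ne_one l h'
    · exact w₂.ne_one l h', w₁.chain_ne.append w₂.chain_ne h⟩

lemma prod_appendW (w₁ w₂ : Word G) (h) :
    Word.prod (appendW w₁ w₂ h) = Word.prod w₁ * Word.prod w₂ := by
  rw [Word.prod, Word.prod, Word.prod, appendW]
  simp

lemma equiv_mul_of_ne (x y : CoprodI G)
    (h : ∀ a ∈ (Word.equiv (M := G) x).toList.getLast?,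
      ∀ b ∈ (Word.equiv (M := G) y).toList.head?, a.1 ≠ b.1) :
    (Word.equiv (M := G) (x * y)).toList
      = (Word.equiv (M := G) x).toList ++ (Word.equiv (M := G) y).toList := by
  have : x * y = Word.prod (appendW (Word.equiv (M := G) x) (Word.equiv (M := G) y) h) := by
    rw [prod_appendW, prod_equiv, prod_equiv]
  rw [this, equiv_prod, appendW]

/-- `x` is represented by a cyclically reduced word of length at least 2. -/
def Cyc (x : CoprodI G) : Prop :=
  2 ≤ len x ∧ ∀ a ∈ (Word.equiv (M := G) x).toList.head?,
    ∀ b ∈ (Word.equiv (M := G) x).toList.getLast?, a.1 ≠ b.1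

lemma cyc_pow {x : CoprodI G} (hx : Cyc x) : ∀ n : ℕ, 1 ≤ n →
    len (x ^ n) = n * len x ∧
    (Word.equiv (M := G) (x ^ n)).toList.head? = (Word.equiv (M := G) x).toList.head? ∧
    (Word.equiv (M := G) (x ^ n)).toList.getLast? = (Word.equiv (M := G) x).toList.getLast? := by
  intro n hn
  induction n, hn using Nat.le_induction with
  | base => simp
  | succ n hn ih =>
    obtain ⟨ihlen, ihhead, ihlast⟩ := ih
    have hjun : ∀ a ∈ (Word.equiv (M := G) (x ^ n)).toList.getLast?,
        ∀ b ∈ (Word.equiv (M := G) x).toList.head?, a.1 ≠ b.1 := by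
      intro a ha b hb
      rw [ihlast] at ha
      exact fun he => hx.2 b hb a ha he.symm
    have hmul := equiv_mul_of_ne (x ^ n) x hjun
    have hne : (Word.equiv (M := G) (x ^ n)).toList ≠ [] := by
      intro h0
      have : len (x ^ n) = 0 := by rw [len, h0]; rfl
      rw [ihlen] at this
      have := hx.1
      nlinarith
    rw [pow_succ]
    refine ⟨?_, ?_, ?_⟩
    · rw [len, hmul, List.length_append]
      have : (Word.equiv (M := G) x).toList.length = len x := rfl
      rw [this, ← len, ihlen]; ring
    · rw [hmul, List.head?_append_of_ne_nil _ hne, ihhead]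
    · rw [hmul, List.getLast?_append]
      have hne' : (Word.equiv (M := G) x).toList ≠ [] := by
        intro h0
        have : len x = 0 := by rw [len, h0]; rfl
        have := hx.1; omega
      simp [List.getLast?_eq_getLast hne']

end FPaux
namespace FPaux
open Monoid Monoid.CoprodI Monoid.CoprodI.Word

variable {ι : Type*} [DecidableEq ι] {G : ι → Type*} [∀ i, Group (G i)]
  [∀ i, DecidableEq (G i)]

lemma len_pow_le (x : CoprodI G) (n : ℕ) : len (x ^ n) ≤ n * len x := by
  induction n with
  | zero => simp [len_one]
  | succ n ih =>
      rw [pow_succ]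
      calc len (x ^ n * x) ≤ len (x ^ n) + len x := len_mul_le _ _
        _ ≤ n * len x + len x := by omega
        _ = (n + 1) * len x := by ring

/-- Cyclically reduced words have minimal length in their conjugacy class. -/
lemma len_conj_ge {z : CoprodI G} (hz : Cyc z) (c : CoprodI G) :
    len z ≤ len (c * z * c⁻¹) := by
  by_contra hlt
  push_neg at hlt
  set K := len (c * z * c⁻¹) with hK
  set Mc := len c with hM
  have key : ∀ N : ℕ, 1 ≤ N → N * len z ≤ N * K + 2 * Mc := by
    intro N hN
    have h1 : z ^ N = c⁻¹ * ((c * z * c⁻¹) ^ N) * c := by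
      rw [conj_pow]
      group
    have h2 : len (z ^ N) = N * len z := (cyc_pow hz N hN).1
    calc N * len z = len (z ^ N) := h2.symm
      _ = len (c⁻¹ * ((c * z * c⁻¹) ^ N) * c) := by rw [h1]
      _ ≤ len (c⁻¹ * (c * z * c⁻¹) ^ N) + len c := len_mul_le _ _
      _ ≤ len c⁻¹ + len ((c * z * c⁻¹) ^ N) + len c := by
          have := len_mul_le c⁻¹ ((c * z * c⁻¹) ^ N); omega
      _ ≤ Mc + N * K + Mc := by
          have h3 : len ((c * z * c⁻¹) ^ N) ≤ N * K := len_pow_le _ N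
          have h4 := len_inv c
          omega
      _ = N * K + 2 * Mc := by ring
  have := key (2 * Mc + 1) (by omega)
  nlinarith

end FPaux
namespace FPaux
open Monoid Monoid.CoprodI Monoid.CoprodI.Word

variable {ι : Type*} [DecidableEq ι] {G : ι → Type*} [∀ i, Group (G i)]
  [∀ i, DecidableEq (G i)]

lemma cyclic_reduction [Nonempty ι] (x : CoprodI G) :
    ∃ c y, x = c * y * c⁻¹ ∧ ((∃ (i : ι) (g : G i), y = of g) ∨ Cyc y) := by
  suffices H : ∀ n (x : CoprodI G), len x ≤ n →
      ∃ c y, x = c * y * c⁻¹ ∧ ((∃ (i : ι) (g : G i), y = of g) ∨ Cyc y) from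
    H (len x) x le_rfl
  intro n
  induction n with
  | zero =>
      intro x hx
      have hx1 : x = 1 := eq_one_of_len_eq_zero (Nat.le_zero.mp hx)
      refine ⟨1, x, by group, Or.inl ⟨Classical.arbitrary ι, 1, ?_⟩⟩
      rw [hx1, map_one]
  | succ n ih =>
      intro x hx
      rcases hl : (Word.equiv (M := G) x).toList with _ | ⟨a, t⟩
      · have hx1 : x = 1 := eq_one_of_len_eq_zero (by rw [len, hl]; rfl)
        refine ⟨1, x, by group, Or.inl ⟨Classical.arbitrary ι, 1, ?_⟩⟩
        rw [hx1, map_one]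
      rcases ht : t with _ | ⟨b, t'⟩
      · -- single letter
        subst ht
        have hxa : x = of a.2 := by
          conv_lhs => rw [← prod_equiv x]
          rw [Word.prod, hl]
          simp
        exact ⟨1, x, by group, Or.inl ⟨a.1, a.2, hxa⟩⟩
      · subst ht
        have htne : (b :: t' : List (Σ i, G i)) ≠ [] := List.cons_ne_nil _ _
        set lst := (b :: t').getLast htne with hlst
        by_cases hab : a.1 = lst.1
        · -- conjugate by the first letter
          have hchain := (Word.equiv (M := G) x).chain_ne
          rw [hl] at hchain
          have hne1 : ∀ l ∈ (b :: t' : List (Σ i, G i)), l.2 ≠ 1 := by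
            intro l hlmem
            exact (Word.equiv (M := G) x).ne_one l (by rw [hl]; exact List.mem_cons_of_mem _ hlmem)
          set restW : Word G := ⟨b :: t', hne1, hchain.tail⟩ with hrestW
          have hxeq : x = of a.2 * Word.prod restW := by
            conv_lhs => rw [← prod_equiv x]
            rw [Word.prod, hl, List.map_cons, List.prod_cons]
            rfl
          set x' := (of a.2)⁻¹ * x * of a.2 with hx'
          have hx'eq : x' = Word.prod restW * of a.2 := by
            rw [hx', hxeq]; group
          -- compute fstIdx of (prod restW)⁻¹
          have hinv : (Word.prod restW)⁻¹ = Word.prod (invW restW) := (prod_invW restW).symm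
          have hfst : (Word.equiv (M := G) ((Word.prod restW)⁻¹)).fstIdx = some a.1 := by
            rw [hinv, equiv_prod]
            rw [Word.fstIdx, invW]
            simp only [List.head?_reverse, List.getLast?_map]
            rw [List.getLast?_eq_getLast htne, ← hlst]
            simp [hab]
          have hlen' : len x' ≤ n := by
            have h1 : len x' = len (x'⁻¹) := (len_inv x').symm
            have h2 : x'⁻¹ = of (a.2⁻¹) * (Word.prod restW)⁻¹ := by
              rw [hx'eq, map_inv]; group
            have h3 : len (of (a.2⁻¹) * (Word.prod restW)⁻¹) ≤ len ((Word.prod restW)⁻¹) :=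
              len_of_mul_le' _ _ hfst
            have h4 : len ((Word.prod restW)⁻¹) = len (Word.prod restW) := len_inv _
            have h5 : len (Word.prod restW) = (b :: t').length := len_prod restW
            have h6 : len x = (a :: b :: t').length := by rw [len, hl]
            rw [h6] at hx
            simp only [List.length_cons] at h5 hx
            rw [h1, h2]
            omega
          obtain ⟨c, y, hxy, hcase⟩ := ih x' hlen'
          refine ⟨of a.2 * c, y, ?_, hcase⟩
          have : x = of a.2 * x' * (of a.2)⁻¹ := by rw [hx']; group
          rw [this, hxy]; group
        · -- already cyclically reduced
          refine ⟨1, x, by group, Or.inr ⟨?_, ?_⟩⟩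
          · rw [len, hl]; simp [List.length_cons]
          · intro p hp q hq
            rw [hl] at hp hq
            simp only [List.head?_cons, Option.mem_def, Option.some.injEq] at hp
            rw [List.getLast?_eq_getLast (List.cons_ne_nil _ _)] at hq
            simp only [Option.mem_def, Option.some.injEq] at hq
            have hq' : q = lst := by
              rw [← hq, hlst]
              exact List.getLast_cons (a := a) htne
            rw [← hp, hq']
            exact hab

end FPaux
namespace FPaux
open Monoid Monoid.CoprodI Monoid.CoprodI.Word

variable {ι : Type*} [DecidableEq ι] {G : ι → Type*} [∀ i, CommGroup (G i)]
  [∀ i, DecidableEq (G i)]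

/-- The retraction onto the `j`-th factor (factors are commutative). -/
noncomputable def proj (j : ι) : CoprodI G →* G j :=
  CoprodI.lift (fun i => if h : i = j then (h ▸ MonoidHom.id (G i)) else 1)

lemma proj_of_self (j : ι) (g : G j) : proj (G := G) j (of g) = g := by
  rw [proj, CoprodI.lift_of, dif_pos rfl]
  rfl

lemma no_divisible [Nonempty ι] (q : ℕ) (hq : 2 ≤ q)
    (hfac : ∀ (i : ι) (g : G i), (∀ n : ℕ, ∃ h : G i, h ^ q ^ n = g) → g = 1)
    (x : CoprodI G) (hx : ∀ n : ℕ, ∃ y : CoprodI G, y ^ q ^ n = x) : x = 1 := by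
  by_contra hx1
  have hq0 : ∀ n : ℕ, 1 ≤ q ^ n := fun n => Nat.one_le_pow _ _ (by omega)
  obtain ⟨c, w, hxc, hcase⟩ := cyclic_reduction x
  rcases hcase with ⟨i, g, rfl⟩ | hcyc
  · -- x is conjugate to a letter `of g`
    have hg : ∀ n : ℕ, ∃ m : G i, m ^ q ^ n = g := by
      intro n
      obtain ⟨y, hy⟩ := hx n
      have hd : (c⁻¹ * y * c) ^ q ^ n = of g := by
        rw [show c⁻¹ * y * c = c⁻¹ * y * c⁻¹⁻¹ by group, conj_pow, hy, hxc]; group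
      obtain ⟨e, v, hdev, hvcase⟩ := cyclic_reduction (c⁻¹ * y * c)
      rcases hvcase with ⟨j, h, rfl⟩ | hvcyc
      · -- root is conjugate to a letter: use the retraction
        refine ⟨proj (G := G) i (of (M := G) h), ?_⟩
        have h1 : of (M := G) g = e * of (h ^ q ^ n) * e⁻¹ := by
          rw [← hd, hdev, conj_pow, map_pow]
        have h2 := congrArg (proj (G := G) i) h1
        rw [proj_of_self, map_mul, map_mul, map_inv, map_pow] at h2
        rw [h2, map_pow, mul_comm ((proj (G := G) i) e)]
        group
      · -- root is conjugate to a cyclically reduced word: length contradiction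
        exfalso
        have h1 : of (M := G) g = e * v ^ q ^ n * e⁻¹ := by
          rw [← hd, hdev, conj_pow]
        have hvc : Cyc (v ^ q ^ n) := by
          obtain ⟨hlen, hhead, hlast⟩ := cyc_pow hvcyc (q ^ n) (hq0 n)
          refine ⟨?_, ?_⟩
          · rw [hlen]; nlinarith [hvcyc.1, hq0 n]
          · rw [hhead, hlast]; exact hvcyc.2
        have h2 := len_conj_ge hvc e
        rw [← h1] at h2
        have h3 := len_of_le (i := i) g
        have h4 := hvc.1
        omega
    have := hfac i g hg
    rw [this, map_one] at hxc
    rw [hxc] at hx1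
    exact hx1 (by group)
  · -- x is conjugate to a cyclically reduced word: contradiction for large n
    exfalso
    set L := len w with hL
    have hnL : L < 2 ^ L := Nat.lt_two_pow_self
    have hnL' : L < q ^ L := lt_of_lt_of_le hnL (Nat.pow_le_pow_left hq L)
    obtain ⟨y, hy⟩ := hx L
    have hd : (c⁻¹ * y * c) ^ q ^ L = w := by
      rw [show c⁻¹ * y * c = c⁻¹ * y * c⁻¹⁻¹ by group, conj_pow, hy, hxc]; group
    obtain ⟨e, v, hdev, hvcase⟩ := cyclic_reduction (c⁻¹ * y * c)
    rcases hvcase with ⟨j, h, rfl⟩ | hvcyc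
    · -- w would be a conjugate of a letter, contradicting `Cyc w`
      have h1 : w = e * of (h ^ q ^ L) * e⁻¹ := by
        rw [← hd, hdev, conj_pow, map_pow]
      have h2 := len_conj_ge hcyc (e⁻¹)
      have h3 : e⁻¹ * w * e⁻¹⁻¹ = of (h ^ q ^ L) := by rw [h1]; group
      rw [h3] at h2
      have h4 := len_of_le (i := j) (h ^ q ^ L)
      have h5 := hcyc.1
      omega
    · have h1 : w = e * v ^ q ^ L * e⁻¹ := by
        rw [← hd, hdev, conj_pow]
      obtain ⟨hlen, hhead, hlast⟩ := cyc_pow hvcyc (q ^ L) (hq0 L)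
      have hvc : Cyc (v ^ q ^ L) := by
        refine ⟨?_, ?_⟩
        · rw [hlen]; nlinarith [hvcyc.1, hq0 L]
        · rw [hhead, hlast]; exact hvcyc.2
      have h2 := len_conj_ge hvc e
      rw [← h1] at h2
      -- L ≥ len (v ^ q^L) = q^L * len v ≥ 2 q^L > L
      rw [hlen] at h2
      have h6 := hvcyc.1
      have : q ^ L * 2 ≤ q ^ L * len v := Nat.mul_le_mul_left _ h6
      omega

end FPaux

/-- the set of `m / p ^ k` is already an additive subgroup -/
def ZinvSub (p : ℕ) (hp : p ≠ 0) : AddSubgroup ℚ where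
  carrier := {x : ℚ | ∃ (m : ℤ) (k : ℕ), x = (m : ℚ) / (p : ℚ) ^ k}
  zero_mem' := ⟨0, 0, by norm_num⟩
  add_mem' := by
    rintro x y ⟨m, k, rfl⟩ ⟨m', k', rfl⟩
    refine ⟨m * p ^ k' + m' * p ^ k, k + k', ?_⟩
    have hp0 : (p : ℚ) ≠ 0 := Nat.cast_ne_zero.mpr hp
    push_cast
    rw [div_add_div _ _ (pow_ne_zero k hp0) (pow_ne_zero k' hp0), pow_add]
    ring_nf
  neg_mem' := by
    rintro x ⟨m, k, rfl⟩
    exact ⟨-m, k, by push_cast; ring⟩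

lemma mem_Zinv_iff {p : ℕ} (hp : p ≠ 0) {x : ℚ} :
    x ∈ Zinv p ↔ ∃ (m : ℤ) (k : ℕ), x = (m : ℚ) / (p : ℚ) ^ k := by
  have : Zinv p = ZinvSub p hp := by
    rw [Zinv]
    have : {x : ℚ | ∃ (m : ℤ) (k : ℕ), x = (m : ℚ) / (p : ℚ) ^ k} = ↑(ZinvSub p hp) := rfl
    rw [this, AddSubgroup.closure_eq]
  rw [this]
  rfl

lemma Zinv_no_div {p q : ℕ} (hp : p.Prime) (hq : q.Prime) (hpq : q ≠ p)
    (g : Multiplicative (Zinv p))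
    (hdiv : ∀ n : ℕ, ∃ h : Multiplicative (Zinv p), h ^ q ^ n = g) : g = 1 := by
  by_contra hg
  have hp0 : (p : ℚ) ≠ 0 := Nat.cast_ne_zero.mpr hp.ne_zero
  set ga : Zinv p := Multiplicative.toAdd g with hga
  have hgv : (ga : ℚ) ≠ 0 := by
    intro h0
    apply hg
    have : ga = 0 := Subtype.ext h0
    have : g = Multiplicative.ofAdd (0 : Zinv p) := by
      rw [← this, hga]; rfl
    simpa using this
  obtain ⟨m₀, k₀, hm₀⟩ := (mem_Zinv_iff hp.ne_zero).mp ga.2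
  have hm₀0 : m₀ ≠ 0 := by
    intro h0; apply hgv; rw [hm₀, h0]; norm_num
  set n := m₀.natAbs with hn
  obtain ⟨h, hh⟩ := hdiv n
  set ha : Zinv p := Multiplicative.toAdd h with hha
  have hsm : (q ^ n) • ha = ga := by
    rw [hha, hga, ← toAdd_pow, hh]
  have hval : ((q ^ n : ℕ) : ℚ) * (ha : ℚ) = (ga : ℚ) := by
    have := congrArg (fun z : Zinv p => (z : ℚ)) hsm
    simpa [nsmul_eq_mul] using this
  obtain ⟨m, k, hmk⟩ := (mem_Zinv_iff hp.ne_zero).mp ha.2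
  rw [hmk, hm₀] at hval
  have hq' : ((q : ℚ)) ^ n * m * p ^ k₀ = m₀ * p ^ k := by
    push_cast at hval
    field_simp at hval
    linarith [hval]
  have hint : (q : ℤ) ^ n * m * (p : ℤ) ^ k₀ = m₀ * (p : ℤ) ^ k := by
    exact_mod_cast hq'
  have hdvd : (q : ℤ) ^ n ∣ m₀ * (p : ℤ) ^ k := ⟨m * (p : ℤ) ^ k₀, by linarith [hint]⟩
  have hcop : IsCoprime ((q : ℤ) ^ n) ((p : ℤ) ^ k) := by
    rw [Int.isCoprime_iff_gcd_eq_one]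
    have hc : Nat.Coprime q p := (Nat.coprime_primes hq hp).mpr hpq
    have : Nat.Coprime (q ^ n) (p ^ k) := hc.pow _ _
    simpa [Int.gcd, Int.natAbs_pow] using this
  have hdvd0 : (q : ℤ) ^ n ∣ m₀ := hcop.dvd_of_dvd_mul_right hdvd
  have hle : (q : ℤ) ^ n ≤ |m₀| :=
    Int.le_of_dvd (abs_pos.mpr hm₀0) ((dvd_abs _ _).mpr hdvd0)
  have hlt : (n : ℤ) < (q : ℤ) ^ n := by
    have h1 : n < 2 ^ n := Nat.lt_two_pow_self
    have h2 : 2 ^ n ≤ q ^ n := Nat.pow_le_pow_left hq.two_le n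
    exact_mod_cast lt_of_lt_of_le h1 h2
  rw [Int.abs_eq_natAbs, ← hn] at hle
  omega



open Monoid in
/-- for nonempty sets of primes `P₁ ⊄ P₂`, the free product
`∏*_{p ∈ P₁} ℤ[1/p]` does not embed into the free product `∏*_{p ∈ P₂} ℤ[1/p]`. -/
theorem stmt_17 (P₁ P₂ : Set ℕ) (hP₁ : ∀ p ∈ P₁, p.Prime) (hP₂ : ∀ p ∈ P₂, p.Prime)
    (hne₁ : P₁.Nonempty) (hne₂ : P₂.Nonempty) (hsub : ¬ P₁ ⊆ P₂) :
    ¬ ∃ f : CoprodI (fun p : P₁ => Multiplicative (Zinv p)) →*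
        CoprodI (fun p : P₂ => Multiplicative (Zinv p)), Function.Injective f := by
  rintro ⟨f, hf⟩
  classical
  obtain ⟨q, hqP₁, hqP₂⟩ := Set.not_subset.mp hsub
  have hq : q.Prime := hP₁ q hqP₁
  have hne : Nonempty ↥P₂ := hne₂.to_subtype
  have hq0 : (q : ℚ) ≠ 0 := Nat.cast_ne_zero.mpr hq.ne_zero
  have h1mem : (1 : ℚ) ∈ Zinv q := AddSubgroup.subset_closure ⟨1, 0, by norm_num⟩
  have hrmem : ∀ n : ℕ, (1 / (q : ℚ) ^ n) ∈ Zinv q := fun n =>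
    AddSubgroup.subset_closure ⟨1, n, by norm_num⟩
  set qi : ↥P₁ := ⟨q, hqP₁⟩ with hqi
  set e : Multiplicative (Zinv q) := Multiplicative.ofAdd (⟨1, h1mem⟩ : Zinv q) with he
  set x := f (CoprodI.of (M := fun p : P₁ => Multiplicative (Zinv p)) (i := qi) e) with hxdef
  have hx : ∀ n : ℕ, ∃ y, y ^ q ^ n = x := by
    intro n
    refine ⟨f (CoprodI.of (M := fun p : P₁ => Multiplicative (Zinv p)) (i := qi)
      (Multiplicative.ofAdd (⟨1 / (q : ℚ) ^ n, hrmem n⟩ : Zinv q))), ?_⟩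
    rw [← map_pow, ← map_pow]
    congr 2
    apply Multiplicative.toAdd.injective
    rw [toAdd_pow]
    apply Subtype.ext
    show ((q ^ n • Multiplicative.toAdd (Multiplicative.ofAdd
        (⟨1 / (q : ℚ) ^ n, hrmem n⟩ : Zinv q)) : Zinv q) : ℚ) = ((Multiplicative.toAdd e : Zinv q) : ℚ)
    rw [toAdd_ofAdd, he, toAdd_ofAdd]
    have : ((q ^ n • (⟨1 / (q : ℚ) ^ n, hrmem n⟩ : Zinv q) : Zinv q) : ℚ)
        = ((q ^ n : ℕ) : ℚ) * (1 / (q : ℚ) ^ n) := by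
      simp [nsmul_eq_mul]
    rw [this]
    push_cast
    field_simp
  have hfac : ∀ (i : ↥P₂) (g : Multiplicative (Zinv ↑i)),
      (∀ n : ℕ, ∃ h, h ^ q ^ n = g) → g = 1 := by
    intro i g hdiv
    exact Zinv_no_div (hP₂ i i.2) hq (fun heq => hqP₂ (heq ▸ i.2)) g hdiv
  have hx1 : x = 1 := FPaux.no_divisible q hq.two_le hfac x hx
  have hof : CoprodI.of (M := fun p : P₁ => Multiplicative (Zinv p)) (i := qi) e = 1 := by
    apply hf
    rw [← hxdef, hx1, map_one]
  have hof1 : CoprodI.of (M := fun p : P₁ => Multiplicative (Zinv p)) (i := qi) e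
      = CoprodI.of (M := fun p : P₁ => Multiplicative (Zinv p)) (i := qi)
        (1 : Multiplicative (Zinv q)) := by
    rw [hof, map_one]
  have he1 : e = 1 := CoprodI.of_injective qi hof1
  have : ((⟨1, h1mem⟩ : Zinv q) : ℚ) = ((0 : Zinv q) : ℚ) := by
    have := congrArg Multiplicative.toAdd he1
    simpa [he] using congrArg (fun z : Zinv q => (z : ℚ)) this
  norm_num at this
end
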